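/- arXiv:1706.07193 — 5 statements merged into one kernel-verified Lean document; each statement's English description precedes it below -/
import Mathlib

section
/- Let X be a complete separable metric space, and let {ν_n} and {θ_n} be sequences of Borel probability measures on X such that sup_n D_KL(θ_n ‖ ν_n) < ∞ and ν_n converges weakly to some probability measure ν. Then the sequence {θ_n} is tight (hence weakly pre-compact). -/
open MeasureTheory Filter Topology Classical
open scoped ENNReal

lemma aux_mul_log_ge (t : ℝ) (ht : 0 ≤ t) : -Real.exp (-1) ≤ t * min (Real.log t) 0 := by
  rcases eq_or_lt_of_le ht with h | h
  · simp [← h]; positivity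
  rcases le_or_gt 1 t with h1 | h1
  · rw [min_eq_right (Real.log_nonneg h1)]; simp; positivity
  · rw [min_eq_left (Real.log_nonpos ht h1.le)]
    have key := Real.add_one_le_exp (-Real.log t - 1)
    rw [Real.exp_sub, Real.exp_neg, Real.exp_log h] at key
    have h2 : t * (-Real.log t - 1 + 1) ≤ t * (t⁻¹ / Real.exp 1) :=
      mul_le_mul_of_nonneg_left key ht
    have h3 : t * t⁻¹ = 1 := mul_inv_cancel₀ h.ne'
    have h4 : t * (t⁻¹ / Real.exp 1) = Real.exp (-1) := by
      rw [div_eq_mul_inv, ← mul_assoc, h3, one_mul, ← Real.exp_neg]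
    nlinarith [h2, h4]

lemma aux_kl_bound {X : Type*} [MeasurableSpace X] (P Q : Measure X)
    [IsProbabilityMeasure P] [IsProbabilityMeasure Q]
    (hPQ : P ≪ Q) (hInt : Integrable (llr P Q) P) {M c : ℝ}
    (hM : ∫ x, llr P Q x ∂P ≤ M) (hc : 1 < c) {A : Set X} (hA : MeasurableSet A) :
    P A ≤ ENNReal.ofReal c * Q A + ENNReal.ofReal ((M + Real.exp (-1)) / Real.log c) := by
  set g := P.rnDeriv Q with hg_def
  have hg : Measurable g := Measure.measurable_rnDeriv P Q
  set S : Set X := {x | ENNReal.ofReal c < g x} with hS_def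
  have hS : MeasurableSet S := measurableSet_lt measurable_const hg
  have hc0 : (0:ℝ) < c := lt_trans one_pos hc
  have hlogc : 0 < Real.log c := Real.log_pos hc
  -- Step A
  have stepA : P A ≤ P (A ∩ Sᶜ) + P S := by
    refine le_trans (measure_mono (fun x hx => ?_)) (measure_union_le _ _)
    by_cases hx' : x ∈ S
    · exact Set.mem_union_right _ hx'
    · exact Set.mem_union_left _ ⟨hx, hx'⟩
  -- Step B
  have stepB : P (A ∩ Sᶜ) ≤ ENNReal.ofReal c * Q A := by
    have h1 : P (A ∩ Sᶜ) = ∫⁻ x in A ∩ Sᶜ, g x ∂Q := by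
      conv_lhs => rw [← Measure.withDensity_rnDeriv_eq P Q hPQ]
      rw [withDensity_apply _ (hA.inter hS.compl)]
    rw [h1]
    calc ∫⁻ x in A ∩ Sᶜ, g x ∂Q ≤ ∫⁻ _ in A ∩ Sᶜ, ENNReal.ofReal c ∂Q := by
          refine setLIntegral_mono measurable_const (fun x hx => ?_)
          exact not_lt.mp hx.2
      _ = ENNReal.ofReal c * Q (A ∩ Sᶜ) := setLIntegral_const _ _
      _ ≤ ENNReal.ofReal c * Q A := by
          exact mul_le_mul_right (measure_mono Set.inter_subset_left) _
  -- a.e. finiteness of g under P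
  have hg_fin : ∀ᵐ x ∂P, g x < ∞ := hPQ.ae_le (Measure.rnDeriv_lt_top P Q)
  -- Step C1 : lower bound for integral over S
  have hC1 : Real.log c * (P S).toReal ≤ ∫ x in S, llr P Q x ∂P := by
    have hae : ∀ᵐ x ∂(P.restrict S), Real.log c ≤ llr P Q x := by
      rw [ae_restrict_iff' hS]
      filter_upwards [hg_fin] with x hx hxS
      have h2 : c < (g x).toReal := by
        rw [← ENNReal.ofReal_lt_iff_lt_toReal hc0.le hx.ne]
        exact hxS
      exact Real.log_le_log hc0 h2.le
    have := setIntegral_mono_ae_restrict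
      (integrableOn_const (measure_ne_top _ _)) hInt.integrableOn hae
    simpa [setIntegral_const, smul_eq_mul, mul_comm, Measure.real] using this
  -- integrability of min (llr P Q) 0
  have hmin_int : Integrable (fun x => min (llr P Q x) 0) P := by
    exact hInt.inf (integrable_const (0:ℝ))
  -- Step C2 : lower bound for integral over Sᶜ
  have hC2 : -Real.exp (-1) ≤ ∫ x in Sᶜ, llr P Q x ∂P := by
    have h1 : ∫ x, min (llr P Q x) 0 ∂P ≤ ∫ x in Sᶜ, min (llr P Q x) 0 ∂P := by
      have hsplit := integral_add_compl hS hmin_int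
      have hSneg : ∫ x in S, min (llr P Q x) 0 ∂P ≤ 0 :=
        setIntegral_nonpos hS (fun x _ => min_le_right _ _)
      linarith
    have h2 : ∫ x in Sᶜ, min (llr P Q x) 0 ∂P ≤ ∫ x in Sᶜ, llr P Q x ∂P :=
      setIntegral_mono hmin_int.integrableOn hInt.integrableOn
        (fun x => min_le_left _ _)
    have h3 : ∫ x, min (llr P Q x) 0 ∂P
        = ∫ x, (g x).toReal • min (llr P Q x) 0 ∂Q :=
      (integral_rnDeriv_smul hPQ).symm
    have h4 : -Real.exp (-1) ≤ ∫ x, (g x).toReal • min (llr P Q x) 0 ∂Q := by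
      have hint4 : Integrable (fun x => (g x).toReal • min (llr P Q x) 0) Q :=
        (integrable_rnDeriv_smul_iff hPQ).mpr hmin_int
      have := integral_mono (integrable_const (-Real.exp (-1))) hint4
        (fun x => by
          simpa [llr, smul_eq_mul] using aux_mul_log_ge ((g x).toReal) ENNReal.toReal_nonneg)
      simpa using this
    linarith
  -- combine C1 and C2
  have hC : P S ≤ ENNReal.ofReal ((M + Real.exp (-1)) / Real.log c) := by
    have hsplit := integral_add_compl hS hInt
    have hreal : (P S).toReal ≤ (M + Real.exp (-1)) / Real.log c := by
      rw [le_div_iff₀ hlogc]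
      nlinarith [hC1, hC2, hsplit, hM]
    calc P S = ENNReal.ofReal (P S).toReal := (ENNReal.ofReal_toReal (measure_ne_top _ _)).symm
      _ ≤ _ := ENNReal.ofReal_le_ofReal hreal
  calc P A ≤ P (A ∩ Sᶜ) + P S := stepA
    _ ≤ ENNReal.ofReal c * Q A + ENNReal.ofReal ((M + Real.exp (-1)) / Real.log c) :=
        add_le_add stepB hC

lemma aux_tight {X : Type*} [MetricSpace X] [CompleteSpace X]
    [TopologicalSpace.SeparableSpace X] [MeasurableSpace X] [BorelSpace X]
    (ν : ℕ → ProbabilityMeasure X) (νlim : ProbabilityMeasure X)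
    (hconv : Tendsto ν atTop (𝓝 νlim)) {δ : ℝ≥0∞} (hδ : 0 < δ) :
    ∃ K : Set X, IsCompact K ∧ ∀ n, (ν n : Measure X) Kᶜ ≤ δ := by
  have hne : Nonempty X := by
    by_contra h
    have h1 : (ν 0 : Measure X) Set.univ = 1 := measure_univ
    rw [Set.univ_eq_empty_iff.mpr (not_nonempty_iff.mp h), measure_empty] at h1
    exact zero_ne_one h1
  set u : ℕ → X := TopologicalSpace.denseSeq X with hu_def
  have hu : DenseRange u := TopologicalSpace.denseRange_denseSeq X
  set δ' : ℝ≥0∞ := min δ 1 with hδ'_def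
  have hδ'0 : 0 < δ' := lt_min hδ one_pos
  have hδ'top : δ' ≠ ⊤ := ne_top_of_le_ne_top ENNReal.one_ne_top (min_le_right _ _)
  set δm : ℕ → ℝ≥0∞ := fun m => δ' * 2⁻¹ ^ (m + 1) with hδm_def
  have hδm0 : ∀ m, 0 < δm m := by
    intro m
    refine ENNReal.mul_pos hδ'0.ne' ?_
    exact (ENNReal.pow_pos (ENNReal.inv_pos.mpr ENNReal.ofNat_ne_top) _).ne'
  set V : ℕ → ℕ → Set X := fun m N => ⋃ i ∈ Finset.range N, Metric.ball (u i) (1 / (m + 1)) with hV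
  set W : ℕ → ℕ → Set X := fun m N => (V m N)ᶜ with hW
  have hVopen : ∀ m N, IsOpen (V m N) := fun m N =>
    isOpen_biUnion fun i _ => Metric.isOpen_ball
  have hWclosed : ∀ m N, IsClosed (W m N) := fun m N => (hVopen m N).isClosed_compl
  have hWanti : ∀ m, Antitone (W m) := by
    intro m N N' hNN'
    apply Set.compl_subset_compl.mpr
    exact Set.biUnion_subset_biUnion_left (Finset.range_subset_range.mpr hNN')
  have hWempty : ∀ m, ⋂ N, W m N = ∅ := by
    intro m
    rw [Set.eq_empty_iff_forall_notMem]
    intro x hx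
    have hpos : (0:ℝ) < 1 / (m + 1) := by positivity
    obtain ⟨i, hi⟩ := Metric.denseRange_iff.mp hu x _ hpos
    have hxW := Set.mem_iInter.mp hx (i + 1)
    apply hxW
    exact Set.mem_biUnion (Finset.mem_range.mpr (Nat.lt_succ_self i)) (Metric.mem_ball.mpr hi)
  have hWtendsto : ∀ (μ : ProbabilityMeasure X) m,
      Tendsto (fun N => (μ : Measure X) (W m N)) atTop (𝓝 0) := by
    intro μ m
    have := tendsto_measure_iInter_atTop (μ := (μ : Measure X))
      (fun N => ((hWclosed m N).measurableSet).nullMeasurableSet) (hWanti m)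
      ⟨0, measure_ne_top _ _⟩
    rwa [hWempty m, measure_empty] at this
  -- for each single measure and target
  have hsingle : ∀ (μ : ProbabilityMeasure X) m, ∃ N, (μ : Measure X) (W m N) < δm m := by
    intro μ m
    have := (hWtendsto μ m).eventually_lt_const (hδm0 m)
    exact this.exists
  have key : ∀ m, ∃ N, ∀ n, (ν n : Measure X) (W m N) < δm m := by
    intro m
    obtain ⟨N₀, hN₀⟩ := hsingle νlim m
    have hlimsup : (atTop.limsup fun n => (ν n : Measure X) (W m N₀))
        ≤ (νlim : Measure X) (W m N₀) :=
      ProbabilityMeasure.limsup_measure_closed_le_of_tendsto hconv (hWclosed m N₀)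
    have hev : ∀ᶠ n in atTop, (ν n : Measure X) (W m N₀) < δm m :=
      eventually_lt_of_limsup_lt (lt_of_le_of_lt hlimsup hN₀)
    obtain ⟨n₁, hn₁⟩ := eventually_atTop.mp hev
    choose Nf hNf using fun n => hsingle (ν n) m
    refine ⟨max N₀ ((Finset.range n₁).sup Nf), fun n => ?_⟩
    rcases le_or_gt n₁ n with h | h
    · exact lt_of_le_of_lt (measure_mono (hWanti m (le_max_left _ _))) (hn₁ n h)
    · refine lt_of_le_of_lt (measure_mono (hWanti m ?_)) (hNf n)
      exact le_max_of_le_right (Finset.le_sup (Finset.mem_range.mpr h))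
  choose Nm hNm using key
  set C : ℕ → Set X := fun m => ⋃ i ∈ Finset.range (Nm m), Metric.closedBall (u i) (1 / (m + 1))
    with hC
  have hCclosed : ∀ m, IsClosed (C m) := fun m =>
    Set.Finite.isClosed_biUnion (Finset.finite_toSet _) (fun i _ => Metric.isClosed_closedBall)
  refine ⟨⋂ m, C m, ?_, ?_⟩
  · apply TotallyBounded.isCompact_of_isClosed
    · rw [Metric.totallyBounded_iff]
      intro ε hε
      obtain ⟨m, hm⟩ := exists_nat_one_div_lt (half_pos hε)
      refine ⟨u '' ↑(Finset.range (Nm m)), (Finset.finite_toSet _).image u, ?_⟩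
      refine (Set.iInter_subset _ m).trans ?_
      intro x hx
      obtain ⟨i, hi, hxi⟩ := Set.mem_iUnion₂.mp hx
      refine Set.mem_biUnion (Set.mem_image_of_mem u hi) ?_
      exact Metric.closedBall_subset_ball (by linarith [half_lt_self hε]) hxi
    · exact isClosed_iInter hCclosed
  · intro n
    have hsub : (⋂ m, C m)ᶜ ⊆ ⋃ m, W m (Nm m) := by
      rw [Set.compl_iInter]
      refine Set.iUnion_mono fun m => Set.compl_subset_compl.mpr ?_
      exact Set.iUnion₂_mono fun i _ => Metric.ball_subset_closedBall
    calc (ν n : Measure X) (⋂ m, C m)ᶜ ≤ (ν n : Measure X) (⋃ m, W m (Nm m)) :=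
          measure_mono hsub
      _ ≤ ∑' m, (ν n : Measure X) (W m (Nm m)) := measure_iUnion_le _
      _ ≤ ∑' m, δm m := ENNReal.tsum_le_tsum (fun m => (hNm m n).le)
      _ = δ' * (2⁻¹ * ∑' m, (2:ℝ≥0∞)⁻¹ ^ m) := by
          rw [hδm_def, ENNReal.tsum_mul_left]
          congr 1
          simp_rw [pow_succ']
          rw [ENNReal.tsum_mul_left]
      _ = δ' := by
          rw [ENNReal.tsum_geometric]
          simp [ENNReal.one_sub_inv_two, ENNReal.inv_mul_cancel]
      _ ≤ δ := min_le_left _ _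


/-- Kullback–Leibler divergence, `⊤` when absolute continuity or integrability fails. -/

noncomputable def klDiv {X : Type*} [MeasurableSpace X] (P Q : Measure X) : EReal :=
  if P ≪ Q ∧ Integrable (llr P Q) P then ((∫ x, llr P Q x ∂P : ℝ) : EReal) else ⊤

/-- If `sup_n D_KL(θ_n ‖ ν_n) < ∞` and `ν_n → ν` weakly on a complete separable metric
space, then the family `{θ_n}` is tight. -/
theorem tightness_from_bounded_KL_and_weak_convergence
    {X : Type*} [MetricSpace X] [CompleteSpace X] [TopologicalSpace.SeparableSpace X]
    [MeasurableSpace X] [BorelSpace X]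
    (ν θ : ℕ → ProbabilityMeasure X) (νlim : ProbabilityMeasure X)
    (hKL : (⨆ n, klDiv (θ n : Measure X) (ν n : Measure X)) < ⊤)
    (hconv : Tendsto ν atTop (𝓝 νlim)) :
    ∀ ε : ℝ≥0∞, 0 < ε → ∃ K : Set X, IsCompact K ∧ ∀ n, (θ n : Measure X) Kᶜ ≤ ε := by
  intro ε hε
  -- extract a uniform real bound M on the KL divergences
  obtain ⟨M, hM, -⟩ := EReal.lt_iff_exists_real_btwn.mp hKL
  have hn : ∀ n, (θ n : Measure X) ≪ (ν n : Measure X) ∧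
      Integrable (llr (θ n : Measure X) (ν n : Measure X)) (θ n : Measure X) ∧
      ∫ x, llr (θ n : Measure X) (ν n : Measure X) x ∂(θ n : Measure X) ≤ M := by
    intro n
    have h1 : klDiv (θ n : Measure X) (ν n : Measure X) < (M : EReal) :=
      lt_of_le_of_lt (le_iSup (fun n => klDiv (θ n : Measure X) (ν n : Measure X)) n) hM
    by_cases hcond : (θ n : Measure X) ≪ (ν n : Measure X) ∧
        Integrable (llr (θ n : Measure X) (ν n : Measure X)) (θ n : Measure X)
    · refine ⟨hcond.1, hcond.2, ?_⟩
      rw [klDiv, if_pos hcond] at h1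
      exact_mod_cast h1.le
    · rw [klDiv, if_neg hcond] at h1
      exact absurd h1 (by simp)
  set M' : ℝ := max M 0 with hM'_def
  set a : ℝ := M' + Real.exp (-1) with ha_def
  have ha : 0 < a := by positivity
  -- the small real parameter
  set e' : ℝ := (min ε 1).toReal / 2 with he'_def
  have hmin_ne_top : min ε 1 ≠ ⊤ := ne_top_of_le_ne_top ENNReal.one_ne_top (min_le_right _ _)
  have hmin_pos : 0 < min ε 1 := lt_min hε one_pos
  have he' : 0 < e' := by
    have := ENNReal.toReal_pos hmin_pos.ne' hmin_ne_top
    positivity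
  set c : ℝ := Real.exp (a / e' + 1) with hc_def
  have hc1 : 1 < c := by
    rw [hc_def, ← Real.exp_zero]
    apply Real.exp_lt_exp.mpr
    positivity
  have hlogc : Real.log c = a / e' + 1 := Real.log_exp _
  have hdiv : (M + Real.exp (-1)) / Real.log c ≤ e' := by
    rw [hlogc]
    rw [div_le_iff₀ (by positivity)]
    have h1 : e' * (a / e' + 1) = a + e' := by field_simp
    have h2 : M + Real.exp (-1) ≤ a := by
      rw [ha_def, hM'_def]; gcongr; exact le_max_left _ _
    linarith
  obtain ⟨K, hK, hKν⟩ := aux_tight ν νlim hconv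
    (δ := ENNReal.ofReal (e' / c)) (by positivity)
  refine ⟨K, hK, fun n => ?_⟩
  obtain ⟨hac, hint, hMn⟩ := hn n
  calc (θ n : Measure X) Kᶜ
      ≤ ENNReal.ofReal c * (ν n : Measure X) Kᶜ
        + ENNReal.ofReal ((M + Real.exp (-1)) / Real.log c) :=
        aux_kl_bound _ _ hac hint hMn hc1 hK.isClosed.measurableSet.compl
    _ ≤ ENNReal.ofReal c * ENNReal.ofReal (e' / c) + ENNReal.ofReal e' := by
        exact add_le_add (mul_le_mul_right (hKν n) _) (ENNReal.ofReal_le_ofReal hdiv)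
    _ = ENNReal.ofReal e' + ENNReal.ofReal e' := by
        rw [← ENNReal.ofReal_mul (by positivity)]
        congr 1
        rw [mul_div_cancel₀ _ (by positivity : (0:ℝ) < c).ne']
    _ = ENNReal.ofReal (e' + e') := (ENNReal.ofReal_add he'.le he'.le).symm
    _ = min ε 1 := by
        rw [he'_def]
        rw [show (min ε 1).toReal / 2 + (min ε 1).toReal / 2 = (min ε 1).toReal by ring]
        exact ENNReal.ofReal_toReal hmin_ne_top
    _ ≤ ε := min_le_left _ _
end

section
/- Let X be a complete separable metric space, {ν_n}, {θ_n} sequences of Borel probability measures on X with sup_n D_KL(θ_n ‖ ν_n) < ∞ and ν_n converging weakly to ν. If a subsequence of {θ_n} converges weakly to θ, then θ is absolutely continuous with respect to ν. -/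
open MeasureTheory Filter Topology Classical
open scoped ENNReal

/-- Pointwise bound: `-1 ≤ t * min (log t) 0` for `0 ≤ t`. -/
lemma neg_one_le_mul_min_log (t : ℝ) (ht : 0 ≤ t) : -1 ≤ t * min (Real.log t) 0 := by
  rcases le_or_gt t 1 with h1 | h1
  · rcases eq_or_lt_of_le ht with h0 | h0
    · simp [← h0]
    · have hlog : Real.log t ≤ 0 := Real.log_nonpos ht h1
      rw [min_eq_left hlog]
      have h2 : -t⁻¹ ≤ Real.log t := Real.neg_inv_le_log ht
      have h3 : t * (-t⁻¹) ≤ t * Real.log t := mul_le_mul_of_nonneg_left h2 ht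
      have h4 : t * (-t⁻¹) = -1 := by
        field_simp
      linarith
  · have hlog : 0 ≤ Real.log t := Real.log_nonneg h1.le
    rw [min_eq_right hlog]
    simp

/-- Key quantitative bound: for probability measures `P ≪ Q` with integrable `llr`,
`P A ≤ (D + 1)/c + e^c * Q A` for any `c > 0`. -/
lemma kl_measure_bound {X : Type*} [MeasurableSpace X] (P Q : Measure X)
    [IsProbabilityMeasure P] [IsProbabilityMeasure Q]
    (hPQ : P ≪ Q) (hint : Integrable (llr P Q) P) {c : ℝ} (hc : 0 < c)
    {A : Set X} (hA : MeasurableSet A) :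
    P A ≤ ENNReal.ofReal ((∫ x, llr P Q x ∂P + 1) / c) + ENNReal.ofReal (Real.exp c) * Q A := by
  set S : Set X := {x | llr P Q x < c} with hSdef
  have hS : MeasurableSet S := measurableSet_lt (measurable_llr _ _) measurable_const
  -- Part 1 : P (A ∩ S) ≤ e^c * Q A
  have h1 : P (A ∩ S) ≤ ENNReal.ofReal (Real.exp c) * Q A := by
    rw [← Measure.setLIntegral_rnDeriv' hPQ (hA.inter hS)]
    calc ∫⁻ x in A ∩ S, P.rnDeriv Q x ∂Q
        ≤ ∫⁻ _ in A ∩ S, ENNReal.ofReal (Real.exp c) ∂Q := by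
          refine lintegral_mono_ae ?_
          filter_upwards [ae_restrict_of_ae (Measure.rnDeriv_lt_top P Q),
            ae_restrict_mem (hA.inter hS)] with x hfin hmem
          have hlt : Real.log (P.rnDeriv Q x).toReal < c := hmem.2
          have h0 : 0 ≤ (P.rnDeriv Q x).toReal := ENNReal.toReal_nonneg
          have hle : (P.rnDeriv Q x).toReal ≤ Real.exp c := by
            rcases eq_or_lt_of_le h0 with h0' | h0'
            · rw [← h0']; exact (Real.exp_pos c).le
            · have h2 := Real.exp_lt_exp.mpr hlt
              rw [Real.exp_log h0'] at h2
              exact h2.le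
          calc P.rnDeriv Q x = ENNReal.ofReal (P.rnDeriv Q x).toReal :=
                (ENNReal.ofReal_toReal hfin.ne).symm
            _ ≤ ENNReal.ofReal (Real.exp c) := ENNReal.ofReal_le_ofReal hle
      _ = ENNReal.ofReal (Real.exp c) * Q (A ∩ S) := by
          rw [setLIntegral_const]
      _ ≤ ENNReal.ofReal (Real.exp c) * Q A := by
          gcongr
          exact Set.inter_subset_left
  -- Part 2 : P Sᶜ ≤ (D + 1)/c
  have h2 : P Sᶜ ≤ ENNReal.ofReal ((∫ x, llr P Q x ∂P + 1) / c) := by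
    set g : X → ℝ := fun x => min (llr P Q x) 0 with hgdef
    have hgint : Integrable g P := hint.inf (integrable_const 0)
    -- -1 ≤ ∫ g dP
    have step3 : (-1 : ℝ) ≤ ∫ x, g x ∂P := by
      rw [← MeasureTheory.integral_rnDeriv_smul hPQ]
      have hmono : ∫ _x, (-1 : ℝ) ∂Q ≤ ∫ x, (P.rnDeriv Q x).toReal • g x ∂Q := by
        refine integral_mono (integrable_const _)
          ((MeasureTheory.integrable_rnDeriv_smul_iff hPQ).mpr hgint) ?_
        intro x
        have := neg_one_le_mul_min_log (P.rnDeriv Q x).toReal ENNReal.toReal_nonneg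
        simpa [hgdef, llr, smul_eq_mul] using this
      simpa using hmono
    -- ∫ g dP ≤ ∫_S g dP
    have step1 : ∫ x, g x ∂P ≤ ∫ x in S, g x ∂P := by
      have hsplit : ∫ x in S, g x ∂P + ∫ x in Sᶜ, g x ∂P = ∫ x, g x ∂P :=
        integral_add_compl hS hgint
      have hcompl : ∫ x in Sᶜ, g x ∂P ≤ 0 :=
        integral_nonpos (fun x => min_le_right _ _)
      linarith
    -- ∫_S g dP ≤ ∫_S llr dP
    have step2 : ∫ x in S, g x ∂P ≤ ∫ x in S, llr P Q x ∂P :=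
      setIntegral_mono hgint.integrableOn hint.integrableOn (fun x => min_le_left _ _)
    have hge : ∀ x ∈ Sᶜ, c ≤ llr P Q x := by
      intro x hx
      simpa [hSdef] using hx
    have h3 : c * (P Sᶜ).toReal ≤ ∫ x in Sᶜ, llr P Q x ∂P :=
      setIntegral_ge_of_const_le_real hS.compl (measure_ne_top _ _) hge hint.integrableOn
    have h4 : ∫ x in S, llr P Q x ∂P + ∫ x in Sᶜ, llr P Q x ∂P = ∫ x, llr P Q x ∂P :=
      integral_add_compl hS hint
    have h5 : c * (P Sᶜ).toReal ≤ ∫ x, llr P Q x ∂P + 1 := by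
      have : (-1 : ℝ) ≤ ∫ x in S, llr P Q x ∂P := le_trans step3 (step1.trans step2)
      linarith
    have h6 : (P Sᶜ).toReal ≤ (∫ x, llr P Q x ∂P + 1) / c :=
      (le_div_iff₀ hc).mpr (by linarith [h5])
    calc P Sᶜ = ENNReal.ofReal (P Sᶜ).toReal := (ENNReal.ofReal_toReal (measure_ne_top _ _)).symm
      _ ≤ ENNReal.ofReal ((∫ x, llr P Q x ∂P + 1) / c) := ENNReal.ofReal_le_ofReal h6
  calc P A ≤ P ((A ∩ S) ∪ Sᶜ) := by
        refine measure_mono ?_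
        intro x hx
        by_cases hxS : x ∈ S
        · exact Or.inl ⟨hx, hxS⟩
        · exact Or.inr hxS
    _ ≤ P (A ∩ S) + P Sᶜ := measure_union_le _ _
    _ ≤ ENNReal.ofReal (Real.exp c) * Q A
          + ENNReal.ofReal ((∫ x, llr P Q x ∂P + 1) / c) := add_le_add h1 h2
    _ = ENNReal.ofReal ((∫ x, llr P Q x ∂P + 1) / c) + ENNReal.ofReal (Real.exp c) * Q A := by
        rw [add_comm]

/-- If `sup_n D_KL(θ_n ‖ ν_n) < ∞`, `ν_n → ν` weakly, and a subsequence of `θ_n` converges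
weakly to `θ`, then `θ ≪ ν`. -/
theorem limit_absolutely_continuous_from_bounded_KL
    {X : Type*} [MetricSpace X] [CompleteSpace X] [TopologicalSpace.SeparableSpace X]
    [MeasurableSpace X] [BorelSpace X]
    (ν θ : ℕ → ProbabilityMeasure X) (νlim θlim : ProbabilityMeasure X)
    (hKL : (⨆ n, klDiv (θ n : Measure X) (ν n : Measure X)) < ⊤)
    (hconv : Tendsto ν atTop (𝓝 νlim))
    (φ : ℕ → ℕ) (hφ : StrictMono φ)
    (hθconv : Tendsto (θ ∘ φ) atTop (𝓝 θlim)) :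
    (θlim : Measure X) ≪ (νlim : Measure X) := by
  -- extract uniform KL data
  set S : EReal := ⨆ n, klDiv (θ n : Measure X) (ν n : Measure X) with hSdef
  have hfacts : ∀ n, (θ n : Measure X) ≪ (ν n : Measure X) ∧
      Integrable (llr (θ n : Measure X) (ν n : Measure X)) (θ n : Measure X) ∧
      ((∫ x, llr (θ n : Measure X) (ν n : Measure X) x ∂(θ n : Measure X) : ℝ) : EReal) = klDiv (θ n : Measure X) (ν n : Measure X) := by
    intro n
    have hle : klDiv (θ n : Measure X) (ν n : Measure X) ≤ S := hSdef ▸ le_iSup (fun m => klDiv (θ m : Measure X) (ν m : Measure X)) n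
    have hne : klDiv (θ n : Measure X) (ν n : Measure X) ≠ ⊤ :=
      fun h => absurd (h ▸ hle) (not_le.mpr hKL)
    by_cases hcond : (θ n : Measure X) ≪ (ν n : Measure X) ∧ Integrable (llr (θ n : Measure X) (ν n : Measure X)) (θ n : Measure X)
    · exact ⟨hcond.1, hcond.2, by rw [klDiv, if_pos hcond]⟩
    · exact absurd (by rw [klDiv, if_neg hcond]) hne
  set C : ℝ := S.toReal with hCdef
  have hC : ∀ n, ∫ x, llr (θ n : Measure X) (ν n : Measure X) x ∂(θ n : Measure X) ≤ C := by
    intro n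
    have hle : ((∫ x, llr (θ n : Measure X) (ν n : Measure X) x ∂(θ n : Measure X) : ℝ) : EReal) ≤ S := by
      rw [(hfacts n).2.2, hSdef]
      exact le_iSup (fun m => klDiv (θ m : Measure X) (ν m : Measure X)) n
    have := EReal.toReal_le_toReal hle (EReal.coe_ne_bot _) hKL.ne
    simpa using this
  refine Measure.AbsolutelyContinuous.mk ?_
  intro A hA hνA
  -- reduce to a quantitative bound for each c > 0
  suffices H : ∀ c : ℝ, 0 < c → (θlim : Measure X) A ≤ ENNReal.ofReal ((C + 1) / c) by
    have htend : Tendsto (fun n : ℕ => ENNReal.ofReal ((C + 1) / n)) atTop (𝓝 0) := by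
      have := ENNReal.tendsto_ofReal (tendsto_const_div_atTop_nhds_zero_nat (C + 1))
      simpa using this
    have hle : (θlim : Measure X) A ≤ 0 := by
      refine ge_of_tendsto htend ?_
      filter_upwards [eventually_ge_atTop 1] with n hn
      exact H n (by exact_mod_cast Nat.pos_of_ne_zero (by omega))
    exact le_antisymm hle zero_le
  intro c hc
  -- epsilon game
  refine ENNReal.le_of_forall_pos_le_add ?_
  intro δ hδ _
  -- choose ε > 0 small: ε ≤ δ/2 and e^c * ε ≤ δ/2
  set b2 : ℝ≥0∞ := ENNReal.ofReal (Real.exp c) with hb2def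
  have hb2_ne_zero : b2 ≠ 0 := by
    simp [hb2def, ENNReal.ofReal_eq_zero, not_le, Real.exp_pos]
  have hb2_ne_top : b2 ≠ ⊤ := ENNReal.ofReal_ne_top
  set ε : ℝ≥0∞ := min ((δ : ℝ≥0∞) / 2) ((δ : ℝ≥0∞) / 2 * b2⁻¹) with hεdef
  have hδ0 : (δ : ℝ≥0∞) ≠ 0 := by exact_mod_cast hδ.ne'
  have hε_pos : 0 < ε := by
    refine lt_min ?_ ?_
    · exact ENNReal.div_pos hδ0 (by norm_num)
    · exact ENNReal.mul_pos (ENNReal.div_pos hδ0 (by norm_num)).ne'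
        (ENNReal.inv_ne_zero.mpr hb2_ne_top)
  -- the main estimate for this ε
  have key : (θlim : Measure X) A ≤ ENNReal.ofReal ((C + 1) / c) + b2 * ε + ε := by
    -- outer regularity of νlim
    obtain ⟨U, hAU, hUopen, hUlt⟩ := A.exists_isOpen_lt_of_lt ε (by
      rw [hνA]; exact hε_pos)
    -- inner approximation of U by a closed set for θlim
    obtain ⟨F, hFU, hFclosed, hθUF⟩ :=
      hUopen.measurableSet.exists_isClosed_lt_add (μ := (θlim : Measure X))
        (measure_ne_top _ _) hε_pos.ne'
    -- sandwich with an open set G, closure G ⊆ U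
    obtain ⟨G, hGopen, hFG, hGU⟩ := normal_exists_closure_subset hFclosed hUopen hFU
    -- portmanteau for θ along φ
    have hθG : (θlim : Measure X) G ≤ atTop.liminf fun n => ((θ ∘ φ) n : Measure X) G :=
      ProbabilityMeasure.le_liminf_measure_open_of_tendsto hθconv hGopen
    -- portmanteau for ν along φ
    have hνconv' : Tendsto (ν ∘ φ) atTop (𝓝 νlim) := hconv.comp hφ.tendsto_atTop
    have hνlimsup : (atTop.limsup fun n => ((ν ∘ φ) n : Measure X) (closure G))
        ≤ (νlim : Measure X) (closure G) :=
      ProbabilityMeasure.limsup_measure_closed_le_of_tendsto hνconv' isClosed_closure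
    have hνclosure : (νlim : Measure X) (closure G) < ε :=
      lt_of_le_of_lt (measure_mono hGU) hUlt
    have hev : ∀ᶠ n in atTop, ((ν ∘ φ) n : Measure X) (closure G) < ε :=
      eventually_lt_of_limsup_lt (lt_of_le_of_lt hνlimsup hνclosure)
    -- per-n KL bound on closure G
    have hbound : ∀ᶠ n in atTop,
        ((θ ∘ φ) n : Measure X) G ≤ ENNReal.ofReal ((C + 1) / c) + b2 * ε := by
      filter_upwards [hev] with n hn
      have hkb := kl_measure_bound ((θ (φ n)) : Measure X) ((ν (φ n)) : Measure X)
        (hfacts (φ n)).1 (hfacts (φ n)).2.1 hc (isClosed_closure (s := G)).measurableSet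
      calc ((θ ∘ φ) n : Measure X) G ≤ ((θ ∘ φ) n : Measure X) (closure G) :=
            measure_mono subset_closure
        _ ≤ ENNReal.ofReal ((∫ x, llr (θ (φ n) : Measure X) (ν (φ n) : Measure X) x ∂(θ (φ n) : Measure X) + 1) / c)
              + ENNReal.ofReal (Real.exp c) * ((ν (φ n)) : Measure X) (closure G) := hkb
        _ ≤ ENNReal.ofReal ((C + 1) / c) + b2 * ε := by
            have hd : (∫ x, llr (θ (φ n) : Measure X) (ν (φ n) : Measure X) x ∂(θ (φ n) : Measure X) + 1) / c ≤ (C + 1) / c := by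
              gcongr
              linarith [hC (φ n)]
            exact add_le_add (ENNReal.ofReal_le_ofReal hd) (mul_le_mul_right hn.le _)
    have hliminf : (atTop.liminf fun n => ((θ ∘ φ) n : Measure X) G)
        ≤ ENNReal.ofReal ((C + 1) / c) + b2 * ε :=
      liminf_le_of_frequently_le hbound.frequently
    calc (θlim : Measure X) A ≤ (θlim : Measure X) U := measure_mono hAU
      _ ≤ (θlim : Measure X) F + ε := hθUF.le
      _ ≤ (θlim : Measure X) G + ε := add_le_add_left (measure_mono hFG) ε
      _ ≤ (atTop.liminf fun n => ((θ ∘ φ) n : Measure X) G) + ε := by gcongr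
      _ ≤ ENNReal.ofReal ((C + 1) / c) + b2 * ε + ε := by gcongr
  -- now b2 * ε + ε ≤ δ
  have hfin : b2 * ε + ε ≤ (δ : ℝ≥0∞) := by
    have h1 : b2 * ε ≤ (δ : ℝ≥0∞) / 2 := by
      calc b2 * ε ≤ b2 * ((δ : ℝ≥0∞) / 2 * b2⁻¹) := by
            gcongr
            exact min_le_right _ _
        _ = (δ : ℝ≥0∞) / 2 * (b2 * b2⁻¹) := by ring
        _ = (δ : ℝ≥0∞) / 2 := by rw [ENNReal.mul_inv_cancel hb2_ne_zero hb2_ne_top, mul_one]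
    have h2 : ε ≤ (δ : ℝ≥0∞) / 2 := min_le_left _ _
    calc b2 * ε + ε ≤ (δ : ℝ≥0∞) / 2 + (δ : ℝ≥0∞) / 2 := add_le_add h1 h2
      _ = (δ : ℝ≥0∞) := ENNReal.add_halves _
  calc (θlim : Measure X) A ≤ ENNReal.ofReal ((C + 1) / c) + b2 * ε + ε := key
    _ = ENNReal.ofReal ((C + 1) / c) + (b2 * ε + ε) := by ring
    _ ≤ ENNReal.ofReal ((C + 1) / c) + δ := by gcongr
end

section
/- Generalized Fatou lemma with varying measures: let X be a Polish space, {H_n} a sequence of nonnegative lower semicontinuous functions H_n: X → [0,∞], uniformly bounded below, and H: X → [0,∞] such that liminf_n H_n(x_n) ≥ H(x) whenever x_n → x in X. If ν_n are Borel probability measures on X converging weakly to ν, then liminf_{n→∞} ∫_X H_n dν_n ≥ ∫_X H dν. -/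
open MeasureTheory Filter Topology Set
open scoped ENNReal

/-- Layer cake formula for `ℝ≥0∞`-valued functions. -/
lemma my_layercake {α : Type*} [MeasurableSpace α] (μ : Measure α)
    {g : α → ℝ≥0∞} (hg : Measurable g) :
    ∫⁻ x, g x ∂μ = ∫⁻ t in Set.Ioi (0:ℝ), μ {x | ENNReal.ofReal t < g x} := by
  have truncs : ∀ N : ℕ, ∫⁻ x, min (g x) N ∂μ
      = ∫⁻ t in Set.Ioi (0:ℝ), μ {x | ENNReal.ofReal t < min (g x) N} := by
    intro N
    have hfin : ∀ x, min (g x) (N:ℝ≥0∞) ≠ ∞ :=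
      fun x => ne_top_of_le_ne_top (ENNReal.natCast_ne_top N) (min_le_right _ _)
    have h1 : ∫⁻ x, min (g x) N ∂μ = ∫⁻ x, ENNReal.ofReal ((min (g x) N).toReal) ∂μ := by
      apply lintegral_congr; intro x
      rw [ENNReal.ofReal_toReal (hfin x)]
    rw [h1, lintegral_eq_lintegral_meas_lt μ (Eventually.of_forall fun x => ENNReal.toReal_nonneg)
      ((hg.min measurable_const).ennreal_toReal.aemeasurable)]
    apply lintegral_congr_ae
    filter_upwards [ae_restrict_mem measurableSet_Ioi] with t ht
    congr 1
    ext x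
    simp only [Set.mem_setOf_eq]
    rw [ENNReal.ofReal_lt_iff_lt_toReal ht.le (hfin x)]
  have hmono : Monotone fun (N : ℕ) (x : α) => min (g x) (N:ℝ≥0∞) := by
    intro N M hNM x
    exact min_le_min le_rfl (by exact_mod_cast hNM)
  have hsup : ∀ x, ⨆ N : ℕ, min (g x) (N:ℝ≥0∞) = g x := by
    intro x
    apply le_antisymm (iSup_le fun N => min_le_left _ _)
    by_cases h : g x = ∞
    · rw [h]
      have h2 : ⨆ N : ℕ, min (⊤:ℝ≥0∞) (N:ℝ≥0∞) = ⨆ N : ℕ, (N:ℝ≥0∞) := by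
        simp [min_eq_right]
      rw [h2, ENNReal.iSup_natCast]
    · obtain ⟨N, hN⟩ := ENNReal.exists_nat_gt h
      calc g x = min (g x) (N:ℝ≥0∞) := (min_eq_left hN.le).symm
        _ ≤ ⨆ N : ℕ, min (g x) (N:ℝ≥0∞) := le_iSup (fun N : ℕ => min (g x) (N:ℝ≥0∞)) N
  have lhs : ∫⁻ x, g x ∂μ = ⨆ N : ℕ, ∫⁻ x, min (g x) N ∂μ := by
    rw [← lintegral_iSup (fun N => hg.min measurable_const) hmono]
    exact lintegral_congr fun x => (hsup x).symm
  have setsup : ∀ t : ℝ, μ {x | ENNReal.ofReal t < g x}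
      = ⨆ N : ℕ, μ {x | ENNReal.ofReal t < min (g x) N} := by
    intro t
    have hU : {x | ENNReal.ofReal t < g x} = ⋃ N : ℕ, {x | ENNReal.ofReal t < min (g x) N} := by
      ext x
      simp only [Set.mem_setOf_eq, Set.mem_iUnion]
      constructor
      · intro h
        obtain ⟨N, hN⟩ := ENNReal.exists_nat_gt (ENNReal.ofReal_ne_top)
        exact ⟨N, lt_min h hN⟩
      · rintro ⟨N, hN⟩
        exact hN.trans_le (min_le_left _ _)
    rw [hU]
    exact Directed.measure_iUnion (Monotone.directed_le fun N M hNM x hx =>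
      hx.trans_le (hmono hNM x))
  have meas_anti : ∀ N : ℕ, Antitone fun t : ℝ => μ {x | ENNReal.ofReal t < min (g x) (N:ℝ≥0∞)} := by
    intro N s t hst
    exact measure_mono fun x hx => lt_of_le_of_lt (ENNReal.ofReal_le_ofReal hst) hx
  rw [lhs]
  calc ⨆ N : ℕ, ∫⁻ x, min (g x) N ∂μ
      = ⨆ N : ℕ, ∫⁻ t in Set.Ioi (0:ℝ), μ {x | ENNReal.ofReal t < min (g x) N} := by
        exact iSup_congr truncs
    _ = ∫⁻ t in Set.Ioi (0:ℝ), ⨆ N : ℕ, μ {x | ENNReal.ofReal t < min (g x) N} := by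
        rw [lintegral_iSup (fun N => (meas_anti N).measurable) ?_]
        intro N M hNM t
        exact measure_mono fun x hx => hx.trans_le (hmono hNM x)
    _ = ∫⁻ t in Set.Ioi (0:ℝ), μ {x | ENNReal.ofReal t < g x} := by
        exact lintegral_congr fun t => (setsup t).symm

/-- The pointwise liminf along neighborhood filters is lower semicontinuous. -/
lemma lsc_liminf_nhds {α : Type*} [TopologicalSpace α] (f : α → ℝ≥0∞) :
    LowerSemicontinuous fun x => liminf f (𝓝 x) := by
  intro x c hc
  obtain ⟨b, hcb, hb⟩ := exists_between hc
  have h : ∀ᶠ y in 𝓝 x, b < f y := eventually_lt_of_lt_liminf hb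
  have hint : interior {y | b < f y} ∈ 𝓝 x := interior_mem_nhds.mpr h
  filter_upwards [hint] with y hy
  have hev : ∀ᶠ z in 𝓝 y, b ≤ f z := by
    filter_upwards [isOpen_interior.mem_nhds hy] with z hz
    exact (interior_subset hz).le
  exact hcb.trans_le (le_liminf_of_le (by isBoundedDefault) hev)

/-- Portmanteau inequality for lower semicontinuous `ℝ≥0∞`-valued functions. -/
lemma lsc_portmanteau {X : Type*} [MeasurableSpace X] [TopologicalSpace X]
    [OpensMeasurableSpace X]
    {μ : Measure X} {μs : ℕ → Measure X} {g : X → ℝ≥0∞} (hg : LowerSemicontinuous g)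
    (h_opens : ∀ G, IsOpen G → μ G ≤ atTop.liminf fun i => μs i G) :
    ∫⁻ x, g x ∂μ ≤ atTop.liminf fun i => ∫⁻ x, g x ∂μs i := by
  have hgm : Measurable g := hg.measurable
  rw [my_layercake μ hgm]
  have hopen : ∀ t : ℝ, IsOpen {x | ENNReal.ofReal t < g x} :=
    fun t => hg.isOpen_preimage (ENNReal.ofReal t)
  calc ∫⁻ t in Set.Ioi (0:ℝ), μ {x | ENNReal.ofReal t < g x}
      ≤ ∫⁻ t in Set.Ioi (0:ℝ), atTop.liminf fun i => μs i {x | ENNReal.ofReal t < g x} :=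
        lintegral_mono fun t => h_opens _ (hopen t)
    _ ≤ atTop.liminf fun i => ∫⁻ t in Set.Ioi (0:ℝ), μs i {x | ENNReal.ofReal t < g x} := by
        apply lintegral_liminf_le
        intro i
        apply Antitone.measurable
        intro s t hst
        exact measure_mono fun x hx => lt_of_le_of_lt (ENNReal.ofReal_le_ofReal hst) hx
    _ = atTop.liminf fun i => ∫⁻ x, g x ∂μs i := by
        apply liminf_congr
        exact Eventually.of_forall fun i => (my_layercake (μs i) hgm).symm

/-- Generalized Fatou lemma with varying measures: if the nonnegative lower semicontinuous
functions `H_n` satisfy `liminf H_n (x_n) ≥ H x` whenever `x_n → x`, and the probability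
measures `ν_n` converge weakly to `ν`, then `liminf ∫ H_n dν_n ≥ ∫ H dν`. -/
theorem fatou_varying_measures
    {X : Type*} [MetricSpace X] [CompleteSpace X] [TopologicalSpace.SeparableSpace X]
    [MeasurableSpace X] [BorelSpace X]
    (H : ℕ → X → ℝ≥0∞) (Hlim : X → ℝ≥0∞)
    (hlsc : ∀ n, LowerSemicontinuous (H n))
    (hliminf : ∀ (x : X) (xs : ℕ → X), Tendsto xs atTop (𝓝 x) →
      Hlim x ≤ liminf (fun n => H n (xs n)) atTop)
    (ν : ℕ → ProbabilityMeasure X) (νlim : ProbabilityMeasure X)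
    (hν : Tendsto ν atTop (𝓝 νlim)) :
    (∫⁻ x, Hlim x ∂(νlim : Measure X))
      ≤ liminf (fun n => ∫⁻ x, H n x ∂(ν n : Measure X)) atTop := by
  classical
  -- the lower envelope construction
  set F : ℕ → X → ℝ≥0∞ := fun m y => ⨅ k, H (m + k) y with hF
  set G : ℕ → X → ℝ≥0∞ := fun m x => liminf (F m) (𝓝 x) with hG
  have hFmono : Monotone F := by
    intro m m' hmm' y
    refine le_iInf fun k => ?_
    calc ⨅ k, H (m + k) y ≤ H (m + (m' + k - m)) y := iInf_le _ _
      _ = H (m' + k) y := by congr 1; omega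
  have hGmono : Monotone G := fun m m' h x =>
    liminf_le_liminf (Eventually.of_forall fun y => hFmono h y)
  have hGlsc : ∀ m, LowerSemicontinuous (G m) := fun m => lsc_liminf_nhds (F m)
  have hFleH : ∀ m n, m ≤ n → ∀ x, F m x ≤ H n x := by
    intro m n hmn x
    calc ⨅ k, H (m + k) x ≤ H (m + (n - m)) x := iInf_le _ _
      _ = H n x := by congr 1; omega
  have hGleF : ∀ m x, G m x ≤ F m x := by
    intro m x
    exact liminf_le_of_frequently_le
      (Frequently.filter_mono ((eventually_pure.mpr le_rfl).frequently) (pure_le_nhds x))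
  -- key pointwise inequality
  have key : ∀ x, Hlim x ≤ ⨆ m, G m x := by
    intro x
    set L := ⨆ m, G m x with hL
    refine ENNReal.le_of_forall_pos_le_add fun ε hε hLtop => ?_
    have hstep : ∀ m : ℕ, ∃ n, m ≤ n ∧ ∃ y ∈ Metric.ball x (1/(m+1)), H n y < L + ε := by
      intro m
      have h1 : liminf (F m) (𝓝 x) < L + ε :=
        lt_of_le_of_lt (le_iSup (fun m => G m x) m)
          (ENNReal.lt_add_right hLtop.ne (by exact_mod_cast hε.ne'))
      have h2 : ∃ᶠ y in 𝓝 x, F m y < L + ε := frequently_lt_of_liminf_lt (by isBoundedDefault) h1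
      obtain ⟨y, hy1, hy2⟩ :=
        (h2.and_eventually (Metric.ball_mem_nhds x (show (0:ℝ) < 1/(m+1) by positivity))).exists
      obtain ⟨k, hk⟩ := iInf_lt_iff.mp hy1
      exact ⟨m + k, Nat.le_add_right m k, y, hy2, hk⟩
    choose n hn y hyball hyH using hstep
    -- recursive index sequences
    let M : ℕ → ℕ := fun j => Nat.rec 0 (fun _ Mj => n Mj + 1) j
    let N : ℕ → ℕ := fun j => n (M j)
    have hMsucc : ∀ j, M (j + 1) = N j + 1 := fun j => rfl
    have hNmono : StrictMono N := by
      apply strictMono_nat_of_lt_succ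
      intro j
      calc N j < N j + 1 := Nat.lt_succ_self _
        _ = M (j + 1) := (hMsucc j).symm
        _ ≤ n (M (j + 1)) := hn _
    have hMj : ∀ j, j ≤ M j := by
      intro j
      induction j with
      | zero => exact Nat.zero_le _
      | succ j ih =>
        calc j + 1 ≤ M j + 1 := Nat.succ_le_succ ih
          _ ≤ n (M j) + 1 := Nat.succ_le_succ (hn _)
          _ = M (j + 1) := (hMsucc j).symm
    set xs : ℕ → X := fun k => if h : ∃ j, N j = k then y (M (Nat.find h)) else x with hxs
    have hxsN : ∀ j, xs (N j) = y (M j) := by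
      intro j
      have hex : ∃ j', N j' = N j := ⟨j, rfl⟩
      have : Nat.find hex = j := hNmono.injective (Nat.find_spec hex)
      simp only [hxs, dif_pos hex, this]
    have hxs_tendsto : Tendsto xs atTop (𝓝 x) := by
      rw [Metric.tendsto_atTop]
      intro δ hδ
      obtain ⟨J, hJ⟩ := exists_nat_gt (1/δ)
      refine ⟨N J, fun k hk => ?_⟩
      by_cases h : ∃ j, N j = k
      · have hfind : N (Nat.find h) = k := Nat.find_spec h
        have hjJ : J ≤ Nat.find h := by
          rw [← hNmono.le_iff_le]; omega
        have hball := hyball (M (Nat.find h))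
        simp only [hxs, dif_pos h]
        rw [Metric.mem_ball] at hball
        refine lt_of_lt_of_le hball ?_
        rw [div_le_iff₀ (by positivity)]
        obtain ⟨Q, hQ⟩ : ∃ Q : ℕ, Q = M (Nat.find h) := ⟨_, rfl⟩
        rw [← hQ]
        have hM : (J:ℝ) ≤ (Q : ℝ) := by
          have : J ≤ Q := by rw [hQ]; exact hjJ.trans (hMj _)
          exact_mod_cast this
        have h2 : 1/δ < (Q : ℝ) + 1 := by linarith
        rw [div_lt_iff₀ hδ] at h2
        nlinarith
      · simp only [hxs, dif_neg h]
        rwa [dist_self]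
    calc Hlim x ≤ liminf (fun k => H k (xs k)) atTop := hliminf x xs hxs_tendsto
      _ ≤ liminf ((fun k => H k (xs k)) ∘ N) atTop := by
          rw [liminf_comp]
          exact liminf_le_liminf_of_le (map_le_iff_le_comap.mpr (hNmono.tendsto_atTop.le_comap))
      _ ≤ L + ε := by
          refine liminf_le_of_frequently_le (Frequently.of_forall ?_) (by isBoundedDefault)
          intro j
          simp only [Function.comp_apply, hxsN j]
          exact (hyH (M j)).le
  -- portmanteau hypothesis
  have h_opens : ∀ G, IsOpen G →
      (νlim : Measure X) G ≤ atTop.liminf fun n => (ν n : Measure X) G :=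
    fun _ hGopen => ProbabilityMeasure.le_liminf_measure_open_of_tendsto hν hGopen
  -- conclusion
  calc ∫⁻ x, Hlim x ∂(νlim : Measure X)
      ≤ ∫⁻ x, ⨆ m, G m x ∂(νlim : Measure X) := lintegral_mono key
    _ = ⨆ m, ∫⁻ x, G m x ∂(νlim : Measure X) :=
        lintegral_iSup (fun m => (hGlsc m).measurable) hGmono
    _ ≤ liminf (fun n => ∫⁻ x, H n x ∂(ν n : Measure X)) atTop := by
        refine iSup_le fun m => ?_
        refine (lsc_portmanteau (hGlsc m) h_opens).trans ?_
        refine liminf_le_liminf ?_ (by isBoundedDefault) (by isBoundedDefault)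
        filter_upwards [eventually_ge_atTop m] with n hmn
        exact lintegral_mono fun x => (hGleF m x).trans (hFleH m n hmn x)
end

section
/- The TL² distance is a metric: on the set TL² = {(θ, f) : θ a Borel probability measure on a compact Riemannian manifold M, f ∈ L²(M, θ)}, the function d_{TL²}((θ₁,f₁),(θ₂,f₂)) = inf over couplings ω of θ₁ and θ₂ of ( ∬ (d_M(x,y)² + |f₁(x) − f₂(y)|²) dω(x,y) )^{1/2} defines a distance (it is symmetric, satisfies the triangle inequality, and vanishes exactly when (θ₁,f₁) = (θ₂,f₂) as elements of TL²). -/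
open MeasureTheory Filter Topology
open scoped ENNReal

/-- The `TL²` (pre)distance between pairs `(θ₁, f₁)` and `(θ₂, f₂)`: the infimum over
couplings `ω` of `θ₁` and `θ₂` of `(∬ (d(x,y)² + |f₁(x) − f₂(y)|²) dω)^{1/2}`. -/
noncomputable def TLdist {M : Type*} [MetricSpace M] [MeasurableSpace M]
    (θ₁ θ₂ : Measure M) (f₁ f₂ : M → ℝ) : ℝ≥0∞ :=
  ⨅ ω ∈ {ω : Measure (M × M) | ω.map Prod.fst = θ₁ ∧ ω.map Prod.snd = θ₂},
    (∫⁻ p, ENNReal.ofReal (dist p.1 p.2 ^ 2 + |f₁ p.1 - f₂ p.2| ^ 2) ∂ω) ^ (1/2 : ℝ)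

section TLaux

open EMetric ProbabilityTheory

set_option linter.unusedSectionVars false

/-- Cauchy-Schwarz for lintegral on a probability measure. -/
lemma TL.lintegral_le_L2 {α : Type*} [MeasurableSpace α] {ω : Measure α}
    [IsProbabilityMeasure ω] {h : α → ℝ≥0∞} (hh : AEMeasurable h ω) :
    ∫⁻ x, h x ∂ω ≤ (∫⁻ x, h x ^ (2:ℝ) ∂ω) ^ (1/2 : ℝ) := by
  have hconj : Real.HolderConjugate 2 2 := Real.holderConjugate_iff.mpr ⟨one_lt_two, by norm_num⟩
  have := ENNReal.lintegral_mul_le_Lp_mul_Lq ω hconj hh (aemeasurable_const (b := (1:ℝ≥0∞)))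
  simpa using this

/-- Lipschitz property of `thickenedIndicatorAux`. -/
lemma TL.thickenedIndicatorAux_lip {α : Type*} [PseudoEMetricSpace α] {δ : ℝ} (F : Set α)
    (u v : α) :
    thickenedIndicatorAux δ F u
      ≤ thickenedIndicatorAux δ F v + (ENNReal.ofReal δ)⁻¹ * edist u v := by
  unfold thickenedIndicatorAux
  have hb : Metric.infEDist v F / ENNReal.ofReal δ
      ≤ Metric.infEDist u F / ENNReal.ofReal δ + edist u v / ENNReal.ofReal δ := by
    rw [← ENNReal.add_div]
    exact ENNReal.div_le_div (by
      simpa [edist_comm] using Metric.infEDist_le_infEDist_add_edist (x := v) (y := u) (s := F)) le_rfl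
  have h1 : (1:ℝ≥0∞) - Metric.infEDist u F / ENNReal.ofReal δ
      ≤ 1 - (Metric.infEDist v F / ENNReal.ofReal δ - edist u v / ENNReal.ofReal δ) :=
    tsub_le_tsub_left (tsub_le_iff_right.mpr hb) 1
  refine h1.trans ?_
  refine (tsub_tsub_le_tsub_add).trans ?_
  simp [ENNReal.div_eq_inv_mul]

lemma TL.map_compProd_prod_fst {α β γ : Type*} [MeasurableSpace α] [MeasurableSpace β]
    [MeasurableSpace γ] (μ : Measure α) [SFinite μ] (κ : Kernel α β) (η : Kernel α γ)
    [IsMarkovKernel κ] [IsMarkovKernel η] :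
    (μ ⊗ₘ (κ ×ₖ η)).map (fun p => (p.1, p.2.1)) = μ ⊗ₘ κ := by
  have hT : Measurable fun p : α × β × γ => (p.1, p.2.1) :=
    measurable_fst.prodMk (measurable_fst.comp measurable_snd)
  ext s hs
  rw [Measure.map_apply hT hs, Measure.compProd_apply (hT hs), Measure.compProd_apply hs]
  apply lintegral_congr; intro x
  have hpre : (Prod.mk x ⁻¹' ((fun p : α × β × γ => (p.1, p.2.1)) ⁻¹' s))
      = Prod.fst ⁻¹' (Prod.mk x ⁻¹' s) := rfl
  rw [hpre, Kernel.prod_apply,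
    ← Measure.map_apply measurable_fst (measurable_prodMk_left hs), Measure.map_fst_prod]
  simp

lemma TL.map_compProd_prod_snd {α β γ : Type*} [MeasurableSpace α] [MeasurableSpace β]
    [MeasurableSpace γ] (μ : Measure α) [SFinite μ] (κ : Kernel α β) (η : Kernel α γ)
    [IsMarkovKernel κ] [IsMarkovKernel η] :
    (μ ⊗ₘ (κ ×ₖ η)).map (fun p => (p.1, p.2.2)) = μ ⊗ₘ η := by
  have hT : Measurable fun p : α × β × γ => (p.1, p.2.2) :=
    measurable_fst.prodMk (measurable_snd.comp measurable_snd)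
  ext s hs
  rw [Measure.map_apply hT hs, Measure.compProd_apply (hT hs), Measure.compProd_apply hs]
  apply lintegral_congr; intro x
  have hpre : (Prod.mk x ⁻¹' ((fun p : α × β × γ => (p.1, p.2.2)) ⁻¹' s))
      = Prod.snd ⁻¹' (Prod.mk x ⁻¹' s) := rfl
  rw [hpre, Kernel.prod_apply,
    ← Measure.map_apply measurable_snd (measurable_prodMk_left hs), Measure.map_snd_prod]
  simp

/-- The ℓ² triangle inequality for square roots. -/
lemma TL.sqrt_tri {d1 d2 d3 e1 e2 e3 : ℝ} (hd1 : 0 ≤ d1) (hd2 : 0 ≤ d2)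
    (he1 : 0 ≤ e1) (he2 : 0 ≤ e2) (hd3 : 0 ≤ d3) (he3 : 0 ≤ e3)
    (hd : d3 ≤ d1 + d2) (he : e3 ≤ e1 + e2) :
    Real.sqrt (d3 ^ 2 + e3 ^ 2)
      ≤ Real.sqrt (d1 ^ 2 + e1 ^ 2) + Real.sqrt (d2 ^ 2 + e2 ^ 2) := by
  have h1 : Real.sqrt (d3 ^ 2 + e3 ^ 2) ≤ Real.sqrt ((d1 + d2) ^ 2 + (e1 + e2) ^ 2) := by
    apply Real.sqrt_le_sqrt
    have := sq_nonneg d3; nlinarith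
  refine h1.trans ?_
  set s1 := Real.sqrt (d1 ^ 2 + e1 ^ 2) with hs1
  set s2 := Real.sqrt (d2 ^ 2 + e2 ^ 2) with hs2
  have hs1nn : 0 ≤ s1 := Real.sqrt_nonneg _
  have hs2nn : 0 ≤ s2 := Real.sqrt_nonneg _
  have hs1sq : s1 ^ 2 = d1 ^ 2 + e1 ^ 2 := Real.sq_sqrt (by positivity)
  have hs2sq : s2 ^ 2 = d2 ^ 2 + e2 ^ 2 := Real.sq_sqrt (by positivity)
  have hcs : d1 * d2 + e1 * e2 ≤ s1 * s2 := by
    have h0 : 0 ≤ d1 * d2 + e1 * e2 := by positivity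
    have hsq : (d1 * d2 + e1 * e2) ^ 2 ≤ (s1 * s2) ^ 2 := by
      rw [mul_pow, hs1sq, hs2sq]
      nlinarith [sq_nonneg (d1 * e2 - d2 * e1)]
    nlinarith [mul_nonneg hs1nn hs2nn]
  have key : (d1 + d2) ^ 2 + (e1 + e2) ^ 2 ≤ (s1 + s2) ^ 2 := by nlinarith
  calc Real.sqrt ((d1 + d2) ^ 2 + (e1 + e2) ^ 2) ≤ Real.sqrt ((s1 + s2) ^ 2) :=
        Real.sqrt_le_sqrt key
    _ = s1 + s2 := Real.sqrt_sq (by positivity)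

lemma TL.ofReal_sqrt_rpow_two (d e : ℝ) :
    ENNReal.ofReal (Real.sqrt (d ^ 2 + e ^ 2)) ^ (2:ℝ) = ENNReal.ofReal (d ^ 2 + e ^ 2) := by
  rw [ENNReal.ofReal_rpow_of_nonneg (Real.sqrt_nonneg _) (by norm_num : (0:ℝ) ≤ 2),
    Real.rpow_two, Real.sq_sqrt (add_nonneg (sq_nonneg _) (sq_nonneg _))]

variable {M : Type*} [MetricSpace M] [MeasurableSpace M] [BorelSpace M]
  [SecondCountableTopology M]

/-- The cost of a coupling. -/
noncomputable def TLcost (f₁ f₂ : M → ℝ) (ω : Measure (M × M)) : ℝ≥0∞ :=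
  (∫⁻ p, ENNReal.ofReal (dist p.1 p.2 ^ 2 + |f₁ p.1 - f₂ p.2| ^ 2) ∂ω) ^ (1/2 : ℝ)

lemma TLdist_eq_inf (θ₁ θ₂ : Measure M) (f₁ f₂ : M → ℝ) :
    TLdist θ₁ θ₂ f₁ f₂
      = ⨅ ω ∈ {ω : Measure (M × M) | ω.map Prod.fst = θ₁ ∧ ω.map Prod.snd = θ₂},
          TLcost f₁ f₂ ω := rfl

lemma coupling_isProb {θ₁ : Measure M} [IsProbabilityMeasure θ₁]
    {ω : Measure (M × M)} (h : ω.map Prod.fst = θ₁) : IsProbabilityMeasure ω := by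
  constructor
  have := Measure.map_apply (μ := ω) measurable_fst MeasurableSet.univ
  rw [h] at this
  simpa using this.symm

lemma measurable_TLintegrand {g₁ g₂ : M → ℝ} (hg₁ : Measurable g₁) (hg₂ : Measurable g₂) :
    Measurable (fun p : M × M => ENNReal.ofReal (dist p.1 p.2 ^ 2 + |g₁ p.1 - g₂ p.2| ^ 2)) := by
  apply ENNReal.measurable_ofReal.comp
  exact (continuous_dist.measurable.pow_const 2).add
    (by simpa [sq_abs] using (((hg₁.comp measurable_fst).sub
      (hg₂.comp measurable_snd)).pow_const 2))

lemma measurable_sqrtexpr {α : Type*} [MeasurableSpace α] {x y : α → M} {u v : α → ℝ}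
    (hx : Measurable x) (hy : Measurable y) (hu : Measurable u) (hv : Measurable v) :
    Measurable fun p => ENNReal.ofReal (Real.sqrt (dist (x p) (y p) ^ 2 + |u p - v p| ^ 2)) :=
  ENNReal.measurable_ofReal.comp (Real.continuous_sqrt.measurable.comp
    (((hx.dist hy).pow_const 2).add (by simpa [sq_abs] using ((hu.sub hv).pow_const 2))))

lemma aemeas_fst {θ₁ : Measure M} {f₁ : M → ℝ} (hf₁ : AEMeasurable f₁ θ₁)
    {ω : Measure (M × M)} (h : ω.map Prod.fst = θ₁) :
    AEMeasurable (fun p : M × M => f₁ p.1) ω := by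
  rw [← h] at hf₁
  exact hf₁.comp_aemeasurable measurable_fst.aemeasurable

lemma aemeas_snd {θ₂ : Measure M} {f₂ : M → ℝ} (hf₂ : AEMeasurable f₂ θ₂)
    {ω : Measure (M × M)} (h : ω.map Prod.snd = θ₂) :
    AEMeasurable (fun p : M × M => f₂ p.2) ω := by
  rw [← h] at hf₂
  exact hf₂.comp_aemeasurable measurable_snd.aemeasurable

lemma aemeas_integrand {θ₁ θ₂ : Measure M} {f₁ f₂ : M → ℝ}
    (hf₁ : AEMeasurable f₁ θ₁) (hf₂ : AEMeasurable f₂ θ₂)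
    {ω : Measure (M × M)}
    (hω : ω ∈ {ω : Measure (M × M) | ω.map Prod.fst = θ₁ ∧ ω.map Prod.snd = θ₂}) :
    AEMeasurable (fun p : M × M =>
      ENNReal.ofReal (dist p.1 p.2 ^ 2 + |f₁ p.1 - f₂ p.2| ^ 2)) ω := by
  have h1 := aemeas_fst hf₁ hω.1
  have h2 := aemeas_snd hf₂ hω.2
  have hd : AEMeasurable (fun p : M × M => dist p.1 p.2) ω :=
    continuous_dist.measurable.aemeasurable
  have habs : AEMeasurable (fun p : M × M => |f₁ p.1 - f₂ p.2| ^ 2) ω := by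
    simpa [sq_abs] using ((h1.sub h2).pow_const 2)
  exact ENNReal.measurable_ofReal.comp_aemeasurable ((hd.pow_const 2).add habs)

lemma TLcost_congr {θ₁ θ₂ : Measure M} {f₁ f₂ g₁ g₂ : M → ℝ}
    (h₁ : f₁ =ᵐ[θ₁] g₁) (h₂ : f₂ =ᵐ[θ₂] g₂) {ω : Measure (M × M)}
    (hω : ω ∈ {ω : Measure (M × M) | ω.map Prod.fst = θ₁ ∧ ω.map Prod.snd = θ₂}) :
    TLcost f₁ f₂ ω = TLcost g₁ g₂ ω := by
  have h₁' : ∀ᵐ p ∂ω, f₁ p.1 = g₁ p.1 := by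
    have : ∀ᵐ y ∂(ω.map Prod.fst), f₁ y = g₁ y := by rw [hω.1]; exact h₁
    exact ae_of_ae_map measurable_fst.aemeasurable (p := fun y => f₁ y = g₁ y) this
  have h₂' : ∀ᵐ p ∂ω, f₂ p.2 = g₂ p.2 := by
    have : ∀ᵐ y ∂(ω.map Prod.snd), f₂ y = g₂ y := by rw [hω.2]; exact h₂
    exact ae_of_ae_map measurable_snd.aemeasurable (p := fun y => f₂ y = g₂ y) this
  unfold TLcost
  congr 1
  apply lintegral_congr_ae
  filter_upwards [h₁', h₂'] with p hp1 hp2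
  rw [hp1, hp2]

lemma TLdist_congr' {θ₁ θ₂ : Measure M} {f₁ f₂ g₁ g₂ : M → ℝ}
    (h₁ : f₁ =ᵐ[θ₁] g₁) (h₂ : f₂ =ᵐ[θ₂] g₂) :
    (⨅ ω ∈ {ω : Measure (M × M) | ω.map Prod.fst = θ₁ ∧ ω.map Prod.snd = θ₂}, TLcost f₁ f₂ ω)
    = ⨅ ω ∈ {ω : Measure (M × M) | ω.map Prod.fst = θ₁ ∧ ω.map Prod.snd = θ₂},
        TLcost g₁ g₂ ω := by
  apply iInf_congr; intro ω
  exact iInf_congr_Prop Iff.rfl (fun hω => TLcost_congr h₁ h₂ hω)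

lemma TLsymm_le (θ₁ θ₂ : Measure M) (f₁ f₂ : M → ℝ)
    (hf₁ : AEMeasurable f₁ θ₁) (hf₂ : AEMeasurable f₂ θ₂) :
    (⨅ ω ∈ {ω : Measure (M × M) | ω.map Prod.fst = θ₁ ∧ ω.map Prod.snd = θ₂}, TLcost f₁ f₂ ω)
    ≤ ⨅ ω ∈ {ω : Measure (M × M) | ω.map Prod.fst = θ₂ ∧ ω.map Prod.snd = θ₁},
        TLcost f₂ f₁ ω := by
  refine le_iInf₂ fun ω hω => ?_
  refine iInf₂_le_of_le (ω.map Prod.swap) ⟨?_, ?_⟩ (le_of_eq ?_)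
  · rw [Measure.map_map measurable_fst measurable_swap]
    simpa [Function.comp_def] using hω.2
  · rw [Measure.map_map measurable_snd measurable_swap]
    simpa [Function.comp_def] using hω.1
  · unfold TLcost
    congr 1
    rw [lintegral_map' ?_ measurable_swap.aemeasurable]
    · apply lintegral_congr
      intro p
      simp [dist_comm, abs_sub_comm]
    · exact aemeas_integrand (ω := ω.map Prod.swap) hf₁ hf₂ (by
        constructor
        · rw [Measure.map_map measurable_fst measurable_swap]; simpa [Function.comp_def] using hω.2
        · rw [Measure.map_map measurable_snd measurable_swap]; simpa [Function.comp_def] using hω.1)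

/-- The pointwise bound: the sup product edist of graph points is at most
the square-root expression. -/
lemma edist_graph_le (g₁ g₂ : M → ℝ) (p : M × M) :
    edist ((p.1 : M), g₁ p.1) (p.2, g₂ p.2)
      ≤ ENNReal.ofReal (Real.sqrt (dist p.1 p.2 ^ 2 + |g₁ p.1 - g₂ p.2| ^ 2)) := by
  rw [Prod.edist_eq]
  have h₁ : dist p.1 p.2 ≤ Real.sqrt (dist p.1 p.2 ^ 2 + |g₁ p.1 - g₂ p.2| ^ 2) := by
    conv_lhs => rw [← Real.sqrt_sq dist_nonneg]
    exact Real.sqrt_le_sqrt (le_add_of_nonneg_right (sq_nonneg _))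
  have h₂ : |g₁ p.1 - g₂ p.2| ≤ Real.sqrt (dist p.1 p.2 ^ 2 + |g₁ p.1 - g₂ p.2| ^ 2) := by
    conv_lhs => rw [← Real.sqrt_sq (abs_nonneg _)]
    exact Real.sqrt_le_sqrt (le_add_of_nonneg_left (sq_nonneg _))
  refine max_le ?_ ?_
  · rw [edist_dist]; exact ENNReal.ofReal_le_ofReal h₁
  · rw [edist_dist, Real.dist_eq]; exact ENNReal.ofReal_le_ofReal h₂

lemma lintegral_lip_le {θ₁ θ₂ : Measure M} [IsProbabilityMeasure θ₁] [IsProbabilityMeasure θ₂]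
    {g₁ g₂ : M → ℝ} (hg₁ : Measurable g₁) (hg₂ : Measurable g₂)
    {ω : Measure (M × M)}
    (hω : ω ∈ {ω : Measure (M × M) | ω.map Prod.fst = θ₁ ∧ ω.map Prod.snd = θ₂})
    (φ : M × ℝ → ℝ≥0∞) (hφm : Measurable φ)
    (K : ℝ≥0∞) (hlip : ∀ u v, φ u ≤ φ v + K * edist u v) :
    ∫⁻ x, φ (x, g₁ x) ∂θ₁ ≤ (∫⁻ x, φ (x, g₂ x) ∂θ₂) + K * TLcost g₁ g₂ ω := by
  haveI := coupling_isProb hω.1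
  have hm1 : Measurable fun x : M => φ (x, g₁ x) := hφm.comp (measurable_id.prodMk hg₁)
  have hm2 : Measurable fun x : M => φ (x, g₂ x) := hφm.comp (measurable_id.prodMk hg₂)
  have e1 : ∫⁻ x, φ (x, g₁ x) ∂θ₁ = ∫⁻ p, φ (p.1, g₁ p.1) ∂ω := by
    rw [← hω.1, lintegral_map hm1 measurable_fst]
  have e2 : ∫⁻ x, φ (x, g₂ x) ∂θ₂ = ∫⁻ p, φ (p.2, g₂ p.2) ∂ω := by
    rw [← hω.2, lintegral_map hm2 measurable_snd]
  rw [e1, e2]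
  have hedm : Measurable fun p : M × M => edist ((p.1 : M), g₁ p.1) (p.2, g₂ p.2) :=
    Measurable.edist ((measurable_fst).prodMk (hg₁.comp measurable_fst))
      ((measurable_snd).prodMk (hg₂.comp measurable_snd))
  calc ∫⁻ p, φ (p.1, g₁ p.1) ∂ω
      ≤ ∫⁻ p, (φ (p.2, g₂ p.2) + K * edist ((p.1 : M), g₁ p.1) (p.2, g₂ p.2)) ∂ω :=
        lintegral_mono fun p => hlip _ _
    _ = (∫⁻ p, φ (p.2, g₂ p.2) ∂ω) + K * ∫⁻ p, edist ((p.1 : M), g₁ p.1) (p.2, g₂ p.2) ∂ω := by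
        rw [lintegral_add_right _ ((hedm).const_mul K), lintegral_const_mul _ hedm]
    _ ≤ (∫⁻ p, φ (p.2, g₂ p.2) ∂ω) + K * TLcost g₁ g₂ ω := by
        gcongr
        have step1 : ∫⁻ p, edist ((p.1 : M), g₁ p.1) (p.2, g₂ p.2) ∂ω
            ≤ ∫⁻ p, ENNReal.ofReal (Real.sqrt (dist p.1 p.2 ^ 2 + |g₁ p.1 - g₂ p.2| ^ 2)) ∂ω :=
          lintegral_mono fun p => edist_graph_le g₁ g₂ p
        refine step1.trans ?_
        have hsm : Measurable fun p : M × M =>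
            ENNReal.ofReal (Real.sqrt (dist p.1 p.2 ^ 2 + |g₁ p.1 - g₂ p.2| ^ 2)) := by
          apply ENNReal.measurable_ofReal.comp
          apply Real.continuous_sqrt.measurable.comp
          exact ((continuous_dist.measurable.pow_const 2).add
            ((((hg₁.comp measurable_fst).sub (hg₂.comp measurable_snd)).abs).pow_const 2))
        refine (TL.lintegral_le_L2 hsm.aemeasurable).trans ?_
        unfold TLcost
        gcongr with p
        rw [ENNReal.ofReal_rpow_of_nonneg (Real.sqrt_nonneg _) (by norm_num : (0:ℝ) ≤ 2),
          Real.rpow_two, Real.sq_sqrt (add_nonneg (sq_nonneg _) (sq_nonneg _))]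

lemma graph_measure_eq {θ₁ θ₂ : Measure M} [IsProbabilityMeasure θ₁] [IsProbabilityMeasure θ₂]
    {g₁ g₂ : M → ℝ} (hg₁ : Measurable g₁) (hg₂ : Measurable g₂)
    (h0 : (⨅ ω ∈ {ω : Measure (M × M) | ω.map Prod.fst = θ₁ ∧ ω.map Prod.snd = θ₂},
      TLcost g₁ g₂ ω) = 0) :
    θ₁.map (fun x => (x, g₁ x)) = θ₂.map (fun x => (x, g₂ x)) := by
  have hsmall : ∀ δ : ℝ≥0∞, 0 < δ → ∃ ω ∈ {ω : Measure (M × M) |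
      ω.map Prod.fst = θ₁ ∧ ω.map Prod.snd = θ₂}, TLcost g₁ g₂ ω < δ := by
    intro δ hδ
    have hlt : (⨅ ω ∈ {ω : Measure (M × M) | ω.map Prod.fst = θ₁ ∧ ω.map Prod.snd = θ₂},
        TLcost g₁ g₂ ω) < δ := by rw [h0]; exact hδ
    simpa only [iInf_lt_iff, exists_prop] using hlt
  have key : ∀ (φ : M × ℝ → ℝ≥0∞), Measurable φ → (∀ u, φ u ≤ 1) →
      ∀ K : ℝ≥0∞, K ≠ ⊤ → (∀ u v, φ u ≤ φ v + K * edist u v) →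
      ∫⁻ x, φ (x, g₁ x) ∂θ₁ = ∫⁻ x, φ (x, g₂ x) ∂θ₂ := by
    intro φ hφm hφ1 K hK hlip
    have hle : ∀ (θ θ' : Measure M), IsProbabilityMeasure θ → IsProbabilityMeasure θ' →
        ∀ (g g' : M → ℝ), Measurable g → Measurable g' →
        (∀ δ : ℝ≥0∞, 0 < δ → ∃ ω ∈ {ω : Measure (M × M) |
          ω.map Prod.fst = θ ∧ ω.map Prod.snd = θ'}, TLcost g g' ω < δ) →
        ∫⁻ x, φ (x, g x) ∂θ ≤ ∫⁻ x, φ (x, g' x) ∂θ' := by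
      intro θ θ' hθ hθ' g g' hg hg' hsm
      apply ENNReal.le_of_forall_pos_le_add
      intro ε hε _
      obtain ⟨ω, hω, hcost⟩ := hsm ((ε : ℝ≥0∞) / K)
        (ENNReal.div_pos (by exact_mod_cast hε.ne') hK)
      calc ∫⁻ x, φ (x, g x) ∂θ
          ≤ (∫⁻ x, φ (x, g' x) ∂θ') + K * TLcost g g' ω :=
            lintegral_lip_le hg hg' hω φ hφm K hlip
        _ ≤ (∫⁻ x, φ (x, g' x) ∂θ') + ε := by
            gcongr
            exact le_trans (mul_le_mul_right hcost.le K) ENNReal.mul_div_le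
    have hsmall' : ∀ δ : ℝ≥0∞, 0 < δ → ∃ ω ∈ {ω : Measure (M × M) |
        ω.map Prod.fst = θ₂ ∧ ω.map Prod.snd = θ₁}, TLcost g₂ g₁ ω < δ := by
      intro δ hδ
      obtain ⟨ω, hω, hcost⟩ := hsmall δ hδ
      refine ⟨ω.map Prod.swap, ⟨?_, ?_⟩, ?_⟩
      · rw [Measure.map_map measurable_fst measurable_swap]; simpa [Function.comp_def] using hω.2
      · rw [Measure.map_map measurable_snd measurable_swap]; simpa [Function.comp_def] using hω.1
      · have : TLcost g₂ g₁ (ω.map Prod.swap) = TLcost g₁ g₂ ω := by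
          unfold TLcost
          congr 1
          rw [lintegral_map ?_ measurable_swap]
          · apply lintegral_congr; intro p; simp [dist_comm, abs_sub_comm]
          · apply ENNReal.measurable_ofReal.comp
            exact (continuous_dist.measurable.pow_const 2).add
              (by simpa [sq_abs] using (((hg₂.comp measurable_fst).sub
                (hg₁.comp measurable_snd)).pow_const 2))
        rw [this]; exact hcost
    exact le_antisymm
      (hle θ₁ θ₂ inferInstance inferInstance g₁ g₂ hg₁ hg₂ hsmall)
      (hle θ₂ θ₁ inferInstance inferInstance g₂ g₁ hg₂ hg₁ hsmall')
  haveI : IsProbabilityMeasure (θ₁.map (fun x => (x, g₁ x))) :=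
    Measure.isProbabilityMeasure_map (measurable_id.prodMk hg₁).aemeasurable
  haveI : IsProbabilityMeasure (θ₂.map (fun x => (x, g₂ x))) :=
    Measure.isProbabilityMeasure_map (measurable_id.prodMk hg₂).aemeasurable
  apply MeasureTheory.ext_of_generate_finite {s : Set (M × ℝ) | IsClosed s}
  · rw [BorelSpace.measurable_eq (α := M × ℝ), borel_eq_generateFrom_isClosed]
  · exact fun s hs t ht _ => hs.inter ht
  · intro F hF
    have δpos : ∀ n : ℕ, 0 < (1 : ℝ) / (n + 1) := fun n => by positivity
    have δlim : Tendsto (fun n : ℕ => (1 : ℝ) / (n + 1)) atTop (𝓝 0) :=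
      tendsto_one_div_add_atTop_nhds_zero_nat
    have lim1 := tendsto_lintegral_thickenedIndicator_of_isClosed
      (θ₁.map (fun x => (x, g₁ x))) hF δpos δlim
    have lim2 := tendsto_lintegral_thickenedIndicator_of_isClosed
      (θ₂.map (fun x => (x, g₂ x))) hF δpos δlim
    have heq : (fun n => ∫⁻ u, (thickenedIndicator (δpos n) F u : ℝ≥0∞)
        ∂(θ₁.map (fun x => (x, g₁ x))))
        = fun n => ∫⁻ u, (thickenedIndicator (δpos n) F u : ℝ≥0∞)
        ∂(θ₂.map (fun x => (x, g₂ x))) := by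
      funext n
      set δ : ℝ := 1 / (n + 1)
      have hδ : 0 < δ := δpos n
      have hauxm : Measurable (thickenedIndicatorAux δ F) :=
        (continuous_thickenedIndicatorAux hδ F).measurable
      have hcoe : ∀ (μ : Measure (M × ℝ)), ∫⁻ u, (thickenedIndicator (δpos n) F u : ℝ≥0∞) ∂μ
          = ∫⁻ u, thickenedIndicatorAux δ F u ∂μ := by
        intro μ
        apply lintegral_congr
        intro u
        rw [thickenedIndicator_apply, ENNReal.coe_toNNReal thickenedIndicatorAux_lt_top.ne]
      rw [hcoe, hcoe,
        lintegral_map hauxm (measurable_id'.prodMk hg₁),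
        lintegral_map hauxm (measurable_id'.prodMk hg₂)]
      exact key _ hauxm (fun u => thickenedIndicatorAux_le_one δ F u)
        ((ENNReal.ofReal δ)⁻¹)
        (ENNReal.inv_ne_top.mpr (ENNReal.ofReal_pos.mpr hδ).ne')
        (fun u v => TL.thickenedIndicatorAux_lip F u v)
    exact tendsto_nhds_unique (heq ▸ lim1) lim2
  · simp [measure_univ]

lemma zero_iff_aux {θ₁ θ₂ : Measure M} [IsProbabilityMeasure θ₁] [IsProbabilityMeasure θ₂]
    {g₁ g₂ : M → ℝ} (hg₁ : Measurable g₁) (hg₂ : Measurable g₂) :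
    (⨅ ω ∈ {ω : Measure (M × M) | ω.map Prod.fst = θ₁ ∧ ω.map Prod.snd = θ₂},
      TLcost g₁ g₂ ω) = 0 ↔ θ₁ = θ₂ ∧ g₁ =ᵐ[θ₁] g₂ := by
  constructor
  · intro h0
    have hμ := graph_measure_eq hg₁ hg₂ h0
    have hθ : θ₁ = θ₂ := by
      ext s hs
      have e1 : (θ₁.map (fun x => (x, g₁ x))) (Prod.fst ⁻¹' s) = θ₁ s := by
        rw [Measure.map_apply (measurable_id'.prodMk hg₁) (measurable_fst hs)]
        congr
      have e2 : (θ₂.map (fun x => (x, g₂ x))) (Prod.fst ⁻¹' s) = θ₂ s := by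
        rw [Measure.map_apply (measurable_id'.prodMk hg₂) (measurable_fst hs)]
        congr
      rw [← e1, ← e2, hμ]
    refine ⟨hθ, ?_⟩
    have hGm : MeasurableSet {p : M × ℝ | g₁ p.1 = p.2} :=
      measurableSet_eq_fun (hg₁.comp measurable_fst) measurable_snd
    have e1 : (θ₁.map (fun x => (x, g₁ x))) {p : M × ℝ | g₁ p.1 = p.2} = 1 := by
      rw [Measure.map_apply (measurable_id'.prodMk hg₁) hGm]
      simpa using (measure_univ (μ := θ₁))
    have e2 : (θ₂.map (fun x => (x, g₂ x))) {p : M × ℝ | g₁ p.1 = p.2}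
        = θ₂ {x : M | g₁ x = g₂ x} := by
      rw [Measure.map_apply (measurable_id'.prodMk hg₂) hGm]
      rfl
    have h1 : θ₂ {x : M | g₁ x = g₂ x} = 1 := by rw [← e2, ← hμ, e1]
    have hmeq : MeasurableSet {x : M | g₁ x = g₂ x} := measurableSet_eq_fun hg₁ hg₂
    have : θ₂ {x : M | g₁ x = g₂ x}ᶜ = 0 := by
      rw [measure_compl hmeq (measure_ne_top _ _), h1, measure_univ, tsub_self]
    rw [hθ]
    exact (MeasureTheory.ae_iff).mpr (by simpa [Set.compl_setOf] using this)
  · rintro ⟨hθ, hae⟩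
    subst hθ
    refine le_antisymm ?_ zero_le
    have hdm : Measurable fun x : M => ((x, x) : M × M) := measurable_id'.prodMk measurable_id'
    refine iInf₂_le_of_le (θ₁.map (fun x => (x, x))) ⟨?_, ?_⟩ ?_
    · rw [Measure.map_map measurable_fst hdm]
      simp [Function.comp_def]
    · rw [Measure.map_map measurable_snd hdm]
      simp [Function.comp_def]
    · refine le_of_eq ?_
      unfold TLcost
      rw [lintegral_map (measurable_TLintegrand hg₁ hg₂) hdm]
      have hz : ∀ᵐ x ∂θ₁, ENNReal.ofReal (dist x x ^ 2 + |g₁ x - g₂ x| ^ 2) = 0 := by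
        filter_upwards [hae] with x hx
        simp [hx]
      rw [lintegral_congr_ae hz, lintegral_zero, ENNReal.zero_rpow_of_pos (by norm_num)]

lemma TLtriangle [CompactSpace M] (θ₁ θ₂ θ₃ : Measure M)
    [IsProbabilityMeasure θ₁] [IsProbabilityMeasure θ₂] [IsProbabilityMeasure θ₃]
    {g₁ g₂ g₃ : M → ℝ} (hg₁ : Measurable g₁) (hg₂ : Measurable g₂) (hg₃ : Measurable g₃) :
    (⨅ ω ∈ {ω : Measure (M × M) | ω.map Prod.fst = θ₁ ∧ ω.map Prod.snd = θ₃},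
        TLcost g₁ g₃ ω)
      ≤ (⨅ ω ∈ {ω : Measure (M × M) | ω.map Prod.fst = θ₁ ∧ ω.map Prod.snd = θ₂},
          TLcost g₁ g₂ ω)
        + ⨅ ω ∈ {ω : Measure (M × M) | ω.map Prod.fst = θ₂ ∧ ω.map Prod.snd = θ₃},
            TLcost g₂ g₃ ω := by
  have core : ∀ ω₁₂ ∈ {ω : Measure (M × M) | ω.map Prod.fst = θ₁ ∧ ω.map Prod.snd = θ₂},
      ∀ ω₂₃ ∈ {ω : Measure (M × M) | ω.map Prod.fst = θ₂ ∧ ω.map Prod.snd = θ₃},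
      (⨅ ω ∈ {ω : Measure (M × M) | ω.map Prod.fst = θ₁ ∧ ω.map Prod.snd = θ₃},
        TLcost g₁ g₃ ω) ≤ TLcost g₁ g₂ ω₁₂ + TLcost g₂ g₃ ω₂₃ := by
    intro ω₁₂ h₁₂ ω₂₃ h₂₃
    haveI := coupling_isProb h₁₂.1
    haveI := coupling_isProb h₂₃.1
    set ρ : Measure (M × M) := ω₁₂.map Prod.swap with hρ
    haveI : IsProbabilityMeasure ρ := Measure.isProbabilityMeasure_map measurable_swap.aemeasurable
    have hρfst : ρ.fst = θ₂ := by rw [hρ, Measure.fst_map_swap]; exact h₁₂.2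
    have h23fst : ω₂₃.fst = θ₂ := h₂₃.1
    haveI : Nonempty M := Measure.nonempty_of_neZero θ₂
    set κ := ρ.condKernel with hκdef
    set η := ω₂₃.condKernel with hηdef
    have hκ : θ₂ ⊗ₘ κ = ρ := by rw [← hρfst, hκdef]; exact ρ.disintegrate _
    have hη : θ₂ ⊗ₘ η = ω₂₃ := by rw [← h23fst, hηdef]; exact ω₂₃.disintegrate _
    set ν : Measure (M × M × M) := θ₂ ⊗ₘ (κ ×ₖ η) with hν
    have hTA : Measurable fun p : M × M × M => (p.1, p.2.1) :=
      measurable_fst.prodMk (measurable_fst.comp measurable_snd)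
    have hTB : Measurable fun p : M × M × M => (p.1, p.2.2) :=
      measurable_fst.prodMk (measurable_snd.comp measurable_snd)
    have hTA' : Measurable fun p : M × M × M => (p.2.1, p.1) :=
      (measurable_fst.comp measurable_snd).prodMk measurable_fst
    have hA : ν.map (fun p => (p.1, p.2.1)) = ρ := by
      rw [hν, TL.map_compProd_prod_fst, hκ]
    have hB : ν.map (fun p => (p.1, p.2.2)) = ω₂₃ := by
      rw [hν, TL.map_compProd_prod_snd, hη]
    have hA' : ν.map (fun p => (p.2.1, p.1)) = ω₁₂ := by
      have e : (fun p : M × M × M => (p.2.1, p.1)) = Prod.swap ∘ (fun p => (p.1, p.2.1)) := rfl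
      rw [e, ← Measure.map_map measurable_swap hTA, hA, hρ,
        Measure.map_map measurable_swap measurable_swap]
      simp
    have hm1 : ν.map (fun p : M × M × M => p.2.1) = θ₁ := by
      have e : (fun p : M × M × M => p.2.1) = Prod.fst ∘ (fun p => (p.2.1, p.1)) := rfl
      rw [e, ← Measure.map_map measurable_fst hTA', hA']
      exact h₁₂.1
    have hm3 : ν.map (fun p : M × M × M => p.2.2) = θ₃ := by
      have e : (fun p : M × M × M => p.2.2) = Prod.snd ∘ (fun p => (p.1, p.2.2)) := rfl
      rw [e, ← Measure.map_map measurable_snd hTB, hB]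
      exact h₂₃.2
    have hmem : ν.map Prod.snd ∈ {ω : Measure (M × M) |
        ω.map Prod.fst = θ₁ ∧ ω.map Prod.snd = θ₃} := by
      constructor
      · rw [Measure.map_map measurable_fst measurable_snd]; exact hm1
      · rw [Measure.map_map measurable_snd measurable_snd]; exact hm3
    refine (iInf₂_le_of_le (ν.map Prod.snd) hmem ?_)
    set a : M × M × M → ℝ≥0∞ := fun p =>
      ENNReal.ofReal (Real.sqrt (dist p.2.1 p.1 ^ 2 + |g₁ p.2.1 - g₂ p.1| ^ 2)) with hadef
    set b : M × M × M → ℝ≥0∞ := fun p =>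
      ENNReal.ofReal (Real.sqrt (dist p.1 p.2.2 ^ 2 + |g₂ p.1 - g₃ p.2.2| ^ 2)) with hbdef
    set c : M × M × M → ℝ≥0∞ := fun p =>
      ENNReal.ofReal (Real.sqrt (dist p.2.1 p.2.2 ^ 2 + |g₁ p.2.1 - g₃ p.2.2| ^ 2)) with hcdef
    have hma : Measurable a := measurable_sqrtexpr (measurable_fst.comp measurable_snd)
      measurable_fst ((hg₁.comp (measurable_fst.comp measurable_snd)))
      (hg₂.comp measurable_fst)
    have hmb : Measurable b := measurable_sqrtexpr measurable_fst
      (measurable_snd.comp measurable_snd) (hg₂.comp measurable_fst)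
      (hg₃.comp (measurable_snd.comp measurable_snd))
    have hmc : Measurable c := measurable_sqrtexpr (measurable_fst.comp measurable_snd)
      (measurable_snd.comp measurable_snd) (hg₁.comp (measurable_fst.comp measurable_snd))
      (hg₃.comp (measurable_snd.comp measurable_snd))
    have hc2 : TLcost g₁ g₃ (ν.map Prod.snd) = (∫⁻ p, c p ^ (2:ℝ) ∂ν) ^ (1/2:ℝ) := by
      unfold TLcost
      rw [lintegral_map (measurable_TLintegrand hg₁ hg₃) measurable_snd]
      congr 1
      exact lintegral_congr fun p => (TL.ofReal_sqrt_rpow_two _ _).symm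
    have ha2 : TLcost g₁ g₂ ω₁₂ = (∫⁻ p, a p ^ (2:ℝ) ∂ν) ^ (1/2:ℝ) := by
      rw [← hA']
      unfold TLcost
      rw [lintegral_map (measurable_TLintegrand hg₁ hg₂) hTA']
      congr 1
      exact lintegral_congr fun p => (TL.ofReal_sqrt_rpow_two _ _).symm
    have hb2 : TLcost g₂ g₃ ω₂₃ = (∫⁻ p, b p ^ (2:ℝ) ∂ν) ^ (1/2:ℝ) := by
      rw [← hB]
      unfold TLcost
      rw [lintegral_map (measurable_TLintegrand hg₂ hg₃) hTB]
      congr 1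
      exact lintegral_congr fun p => (TL.ofReal_sqrt_rpow_two _ _).symm
    have hpt : ∀ p, c p ≤ a p + b p := by
      intro p
      rw [hadef, hbdef, hcdef]
      dsimp only
      rw [← ENNReal.ofReal_add (Real.sqrt_nonneg _) (Real.sqrt_nonneg _)]
      apply ENNReal.ofReal_le_ofReal
      exact TL.sqrt_tri dist_nonneg dist_nonneg (abs_nonneg _) (abs_nonneg _) dist_nonneg
        (abs_nonneg _) (dist_triangle _ _ _) (abs_sub_le _ _ _)
    rw [hc2, ha2, hb2]
    calc (∫⁻ p, c p ^ (2:ℝ) ∂ν) ^ (1/2:ℝ)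
        ≤ (∫⁻ p, (a + b) p ^ (2:ℝ) ∂ν) ^ (1/2:ℝ) := by
          apply ENNReal.rpow_le_rpow _ (by norm_num)
          apply lintegral_mono
          intro p
          exact ENNReal.rpow_le_rpow (hpt p) (by norm_num)
      _ ≤ (∫⁻ p, a p ^ (2:ℝ) ∂ν) ^ (1/2:ℝ) + (∫⁻ p, b p ^ (2:ℝ) ∂ν) ^ (1/2:ℝ) :=
          ENNReal.lintegral_Lp_add_le hma.aemeasurable hmb.aemeasurable one_le_two
  conv_rhs => rw [iInf_subtype', iInf_subtype', ENNReal.iInf_add]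
  refine le_iInf fun x => ?_
  rw [ENNReal.add_iInf]
  exact le_iInf fun y => core x.1 x.2 y.1 y.2

end TLaux

/-- The `TL²` distance is a metric on pairs `(θ, f)` with `θ` a Borel probability measure
on a compact metric space (e.g. a compact Riemannian manifold with its geodesic distance)
and `f ∈ L²(θ)`: it is symmetric, satisfies the triangle inequality, and vanishes exactly
when the two pairs coincide (the functions agreeing almost everywhere). -/
theorem TLdist_is_metric
    {M : Type*} [MetricSpace M] [CompactSpace M] [MeasurableSpace M] [BorelSpace M]
    (θ₁ θ₂ θ₃ : Measure M)
    [IsProbabilityMeasure θ₁] [IsProbabilityMeasure θ₂] [IsProbabilityMeasure θ₃]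
    (f₁ f₂ f₃ : M → ℝ)
    (hf₁ : MemLp f₁ 2 θ₁) (hf₂ : MemLp f₂ 2 θ₂) (hf₃ : MemLp f₃ 2 θ₃) :
    TLdist θ₁ θ₂ f₁ f₂ = TLdist θ₂ θ₁ f₂ f₁ ∧
    TLdist θ₁ θ₃ f₁ f₃ ≤ TLdist θ₁ θ₂ f₁ f₂ + TLdist θ₂ θ₃ f₂ f₃ ∧
    (TLdist θ₁ θ₂ f₁ f₂ = 0 ↔ θ₁ = θ₂ ∧ f₁ =ᵐ[θ₁] f₂) := by
  have ham₁ : AEMeasurable f₁ θ₁ := hf₁.aestronglyMeasurable.aemeasurable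
  have ham₂ : AEMeasurable f₂ θ₂ := hf₂.aestronglyMeasurable.aemeasurable
  have ham₃ : AEMeasurable f₃ θ₃ := hf₃.aestronglyMeasurable.aemeasurable
  set g₁ : M → ℝ := ham₁.mk f₁ with hg₁def
  set g₂ : M → ℝ := ham₂.mk f₂ with hg₂def
  set g₃ : M → ℝ := ham₃.mk f₃ with hg₃def
  have hg₁ : Measurable g₁ := ham₁.measurable_mk
  have hg₂ : Measurable g₂ := ham₂.measurable_mk
  have hg₃ : Measurable g₃ := ham₃.measurable_mk
  have ae₁ : f₁ =ᵐ[θ₁] g₁ := ham₁.ae_eq_mk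
  have ae₂ : f₂ =ᵐ[θ₂] g₂ := ham₂.ae_eq_mk
  have ae₃ : f₃ =ᵐ[θ₃] g₃ := ham₃.ae_eq_mk
  have e12 : TLdist θ₁ θ₂ f₁ f₂
      = ⨅ ω ∈ {ω : Measure (M × M) | ω.map Prod.fst = θ₁ ∧ ω.map Prod.snd = θ₂},
          TLcost g₁ g₂ ω := by
    rw [TLdist_eq_inf]; exact TLdist_congr' ae₁ ae₂
  have e13 : TLdist θ₁ θ₃ f₁ f₃
      = ⨅ ω ∈ {ω : Measure (M × M) | ω.map Prod.fst = θ₁ ∧ ω.map Prod.snd = θ₃},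
          TLcost g₁ g₃ ω := by
    rw [TLdist_eq_inf]; exact TLdist_congr' ae₁ ae₃
  have e23 : TLdist θ₂ θ₃ f₂ f₃
      = ⨅ ω ∈ {ω : Measure (M × M) | ω.map Prod.fst = θ₂ ∧ ω.map Prod.snd = θ₃},
          TLcost g₂ g₃ ω := by
    rw [TLdist_eq_inf]; exact TLdist_congr' ae₂ ae₃
  refine ⟨?_, ?_, ?_⟩
  · rw [TLdist_eq_inf, TLdist_eq_inf]
    exact le_antisymm (TLsymm_le θ₁ θ₂ f₁ f₂ ham₁ ham₂) (TLsymm_le θ₂ θ₁ f₂ f₁ ham₂ ham₁)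
  · rw [e12, e13, e23]
    exact TLtriangle θ₁ θ₂ θ₃ hg₁ hg₂ hg₃
  · rw [e12, zero_iff_aux hg₁ hg₂]
    constructor
    · rintro ⟨hθ, hg⟩
      subst hθ
      exact ⟨rfl, ae₁.trans (hg.trans ae₂.symm)⟩
    · rintro ⟨hθ, hfe⟩
      subst hθ
      exact ⟨rfl, ae₁.symm.trans (hfe.trans ae₂)⟩
end

section
/- Continuity of inner products under TL² convergence: if (θ_n, f_n) → (θ, f) and (θ_n, g_n) → (θ, g) in the TL² metric, then the inner products converge: ∫_M f_n g_n dθ_n → ∫_M f g dθ. -/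
open MeasureTheory Filter Topology
open scoped ENNReal

namespace TL2aux

open ProbabilityTheory BoundedContinuousFunction

section hilbert

lemma inner_est {E : Type*} [NormedAddCommGroup E] [InnerProductSpace ℝ E] (a b a' b' : E) :
    |inner (𝕜 := ℝ) a b - inner (𝕜 := ℝ) a' b'| ≤
      ‖a - a'‖ * (‖b'‖ + ‖b - b'‖) + ‖a'‖ * ‖b - b'‖ := by
  have h : inner (𝕜 := ℝ) a b - inner (𝕜 := ℝ) a' b' =
      inner (𝕜 := ℝ) (a - a') b + inner (𝕜 := ℝ) a' (b - b') := by
    simp only [inner_sub_left, inner_sub_right]; ring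
  rw [h]
  refine (abs_add_le _ _).trans
    (add_le_add ((abs_real_inner_le_norm _ _).trans ?_) (abs_real_inner_le_norm _ _))
  have hb : ‖b‖ ≤ ‖b'‖ + ‖b - b'‖ := by
    calc ‖b‖ = ‖b' + (b - b')‖ := by congr 1; abel
      _ ≤ _ := norm_add_le _ _
  exact mul_le_mul_of_nonneg_left hb (norm_nonneg _)

end hilbert

lemma sqrt_sq (x : ℝ≥0∞) : (x ^ (1/2 : ℝ)) ^ (2 : ℕ) = x := by
  rw [← ENNReal.rpow_natCast, ← ENNReal.rpow_mul]; norm_num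

lemma nnnorm_sq_eq (z : ℝ) : ((‖z‖₊ : ℝ≥0∞)) ^ (2:ℝ) = ENNReal.ofReal (|z| ^ 2) := by
  rw [← enorm_eq_nnnorm, Real.enorm_eq_ofReal_abs, ENNReal.ofReal_rpow_of_nonneg (abs_nonneg _)
      (by norm_num : (0:ℝ) ≤ 2),
    show |z| ^ (2:ℝ) = |z| ^ (2:ℕ) from by rw [← Real.rpow_natCast]; norm_num]

variable {M : Type*} [MetricSpace M] [CompactSpace M] [MeasurableSpace M] [BorelSpace M]

lemma isProb {μ : Measure M} [IsProbabilityMeasure μ] {ω : Measure (M × M)}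
    (h : ω.map Prod.fst = μ) : IsProbabilityMeasure ω := by
  constructor
  have h1 : (ω.map Prod.fst) Set.univ = 1 := by rw [h]; exact measure_univ
  rwa [Measure.map_apply measurable_fst MeasurableSet.univ, Set.preimage_univ] at h1

lemma glue_aux [Nonempty M] (μ : Measure M) [IsProbabilityMeasure μ]
    (κ η : Kernel M M) [IsMarkovKernel κ] [IsMarkovKernel η] :
    (μ.compProd (κ ×ₖ η)).map (fun p => (p.1, p.2.1)) = μ.compProd κ ∧
    (μ.compProd (κ ×ₖ η)).map (fun p => (p.1, p.2.2)) = μ.compProd η := by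
  have hm1 : Measurable (fun p : M × M × M => (p.1, p.2.1)) := by fun_prop
  have hm2 : Measurable (fun p : M × M × M => (p.1, p.2.2)) := by fun_prop
  constructor
  · ext s hs
    rw [Measure.map_apply hm1 hs, Measure.compProd_apply (hm1 hs), Measure.compProd_apply hs]
    refine lintegral_congr fun x => ?_
    show ((κ ×ₖ η) x) {p | p.1 ∈ Prod.mk x ⁻¹' s} = _
    rw [← Kernel.fst_apply' _ _ (measurable_prodMk_left hs), Kernel.fst_prod]
  · ext s hs
    rw [Measure.map_apply hm2 hs, Measure.compProd_apply (hm2 hs), Measure.compProd_apply hs]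
    refine lintegral_congr fun x => ?_
    show ((κ ×ₖ η) x) {p | p.2 ∈ Prod.mk x ⁻¹' s} = _
    exact (Kernel.snd_apply' _ _ (measurable_prodMk_left hs)).symm.trans (by rw [Kernel.snd_prod])

lemma glue [Nonempty M] (ω σ : Measure (M × M)) [IsProbabilityMeasure ω] [IsProbabilityMeasure σ]
    (h : ω.map Prod.fst = σ.map Prod.fst) :
    ∃ τ : Measure (M × M × M), IsProbabilityMeasure τ ∧
      τ.map (fun p => (p.1, p.2.1)) = ω ∧ τ.map (fun p => (p.1, p.2.2)) = σ := by
  haveI : IsProbabilityMeasure (ω.map Prod.fst) := by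
    constructor; rw [Measure.map_apply measurable_fst MeasurableSet.univ]; simp
  refine ⟨(ω.map Prod.fst).compProd (ω.condKernel ×ₖ σ.condKernel), by infer_instance, ?_, ?_⟩
  · have h1 := (glue_aux (ω.map Prod.fst) ω.condKernel σ.condKernel).1
    rwa [show (ω.map Prod.fst).compProd ω.condKernel = ω from ω.disintegrate _] at h1
  · have h1 := (glue_aux (ω.map Prod.fst) ω.condKernel σ.condKernel).2
    rw [h] at h1 ⊢
    rwa [show (σ.map Prod.fst).compProd σ.condKernel = σ from σ.disintegrate _] at h1

lemma phi_term (φ : M →ᵇ ℝ) (γ : ℕ → Measure (M × M)) [∀ n, IsProbabilityMeasure (γ n)]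
    (hcost : Tendsto (fun n => ∫⁻ p, ENNReal.ofReal (dist p.1 p.2 ^ 2) ∂(γ n)) atTop (𝓝 0)) :
    Tendsto (fun n => ∫⁻ p, ((‖φ p.1 - φ p.2‖₊ : ℝ≥0∞)) ^ (2:ℝ) ∂(γ n)) atTop (𝓝 0) := by
  rw [ENNReal.tendsto_nhds_zero]
  intro ε hε
  set e := min ε 1 with he
  have he0 : e ≠ 0 := (lt_min hε zero_lt_one).ne'
  have het : e ≠ ∞ := ((min_le_right _ _).trans_lt (by norm_num)).ne
  have hee : e ≤ ε := min_le_left _ _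
  have h2 : (e/2) ≠ 0 := by simp [ENNReal.div_eq_zero_iff, he0]
  have h2t : (e/2) ≠ ∞ := (ENNReal.div_lt_top het (by norm_num)).ne
  have h2pos : 0 < (e/2).toReal := ENNReal.toReal_pos h2 h2t
  set r := Real.sqrt ((e/2).toReal) with hr
  have hr0 : 0 < r := Real.sqrt_pos.mpr h2pos
  have hrsq : ENNReal.ofReal (r ^ 2) = e/2 := by
    rw [Real.sq_sqrt h2pos.le, ENNReal.ofReal_toReal h2t]
  obtain ⟨δ, hδ0, hδ⟩ := Metric.uniformContinuous_iff.mp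
    (CompactSpace.uniformContinuous_of_continuous φ.continuous) r hr0
  set S : Set (M × M) := {p | δ ≤ dist p.1 p.2} with hS
  have hSm : MeasurableSet S :=
    (isClosed_le continuous_const (continuous_fst.dist continuous_snd)).measurableSet
  set C : ℝ≥0∞ := ENNReal.ofReal ((2 * ‖φ‖) ^ 2) + 1 with hC
  have hCt : C ≠ ∞ := by
    rw [hC]; exact ENNReal.add_ne_top.mpr ⟨ENNReal.ofReal_ne_top, ENNReal.one_ne_top⟩
  have hδsq0 : ENNReal.ofReal (δ ^ 2) ≠ 0 := (ENNReal.ofReal_pos.mpr (by positivity)).ne'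
  have hδsqt : ENNReal.ofReal (δ ^ 2) ≠ ∞ := ENNReal.ofReal_ne_top
  have hpt : ∀ n, (∫⁻ p, ((‖φ p.1 - φ p.2‖₊ : ℝ≥0∞)) ^ (2:ℝ) ∂(γ n))
      ≤ e/2 + C * (γ n) S := by
    intro n
    have hb : ∀ p : M × M, ((‖φ p.1 - φ p.2‖₊ : ℝ≥0∞)) ^ (2:ℝ)
        ≤ ENNReal.ofReal (r ^ 2) + S.indicator (fun _ => C) p := by
      intro p
      have habs : ((‖φ p.1 - φ p.2‖₊ : ℝ≥0∞)) ^ (2:ℝ)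
          = ENNReal.ofReal (dist (φ p.1) (φ p.2) ^ 2) := by
        rw [nnnorm_sq_eq, Real.dist_eq]
      by_cases hp : p ∈ S
      · rw [Set.indicator_of_mem hp, habs]
        have hle : ENNReal.ofReal (dist (φ p.1) (φ p.2) ^ 2) ≤ C := by
          refine le_trans (ENNReal.ofReal_le_ofReal
            (pow_le_pow_left₀ dist_nonneg (φ.dist_le_two_norm p.1 p.2) 2)) ?_
          rw [hC]; exact le_add_right le_rfl
        exact le_add_left hle
      · rw [Set.indicator_of_notMem hp, add_zero, habs]
        have hlt : dist p.1 p.2 < δ := not_le.mp hp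
        exact ENNReal.ofReal_le_ofReal
          (pow_le_pow_left₀ dist_nonneg (hδ hlt).le 2)
    calc (∫⁻ p, ((‖φ p.1 - φ p.2‖₊ : ℝ≥0∞)) ^ (2:ℝ) ∂(γ n))
        ≤ ∫⁻ p, (ENNReal.ofReal (r ^ 2) + S.indicator (fun _ => C) p) ∂(γ n) :=
          lintegral_mono hb
      _ = e/2 + C * (γ n) S := by
          rw [lintegral_add_left measurable_const, lintegral_const,
            lintegral_indicator hSm, setLIntegral_const, measure_univ, mul_one, hrsq]
  have hcb : ∀ n, C * (γ n) S ≤ (C / ENNReal.ofReal (δ ^ 2)) *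
      (∫⁻ p, ENNReal.ofReal (dist p.1 p.2 ^ 2) ∂(γ n)) := by
    intro n
    have cheb : ENNReal.ofReal (δ ^ 2) * (γ n) S
        ≤ ∫⁻ p, ENNReal.ofReal (dist p.1 p.2 ^ 2) ∂(γ n) := by
      refine le_trans (mul_le_mul_right (measure_mono ?_) _)
        (mul_meas_ge_le_lintegral₀ ?_ _)
      · intro p hp
        exact ENNReal.ofReal_le_ofReal (pow_le_pow_left₀ hδ0.le hp 2)
      · exact (ENNReal.continuous_ofReal.comp (by fun_prop)).measurable.aemeasurable
    calc C * (γ n) S = (C / ENNReal.ofReal (δ ^ 2)) * (ENNReal.ofReal (δ ^ 2) * (γ n) S) := by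
          rw [← mul_assoc, ENNReal.div_mul_cancel hδsq0 hδsqt]
      _ ≤ _ := mul_le_mul_right cheb _
  have hsm : Tendsto (fun n => (C / ENNReal.ofReal (δ ^ 2)) *
      (∫⁻ p, ENNReal.ofReal (dist p.1 p.2 ^ 2) ∂(γ n))) atTop (𝓝 0) := by
    simpa using ENNReal.Tendsto.const_mul hcost
      (Or.inr (ENNReal.div_lt_top hCt hδsq0).ne)
  filter_upwards [ENNReal.tendsto_nhds_zero.mp hsm (e/2) (pos_iff_ne_zero.mpr h2)] with n hn
  calc (∫⁻ p, ((‖φ p.1 - φ p.2‖₊ : ℝ≥0∞)) ^ (2:ℝ) ∂(γ n))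
      ≤ e/2 + C * (γ n) S := hpt n
    _ ≤ e/2 + e/2 := add_le_add_right ((hcb n).trans hn) _
    _ = e := ENNReal.add_halves e
    _ ≤ ε := hee

lemma dev_tendsto (θm : Measure M) [IsProbabilityMeasure θm] {h : M → ℝ}
    (hh : MemLp h 2 θm) (γ : ℕ → Measure (M × M)) [∀ n, IsProbabilityMeasure (γ n)]
    (h1 : ∀ n, (γ n).map Prod.fst = θm) (h2 : ∀ n, (γ n).map Prod.snd = θm)
    (hcost : Tendsto (fun n => ∫⁻ p, ENNReal.ofReal (dist p.1 p.2 ^ 2) ∂(γ n)) atTop (𝓝 0)) :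
    Tendsto (fun n => eLpNorm (fun p : M × M => h p.1 - h p.2) 2 (γ n)) atTop (𝓝 0) := by
  rw [ENNReal.tendsto_nhds_zero]
  intro ε hε
  set e := min ε 1 with he
  have he0 : e ≠ 0 := (lt_min hε zero_lt_one).ne'
  have hee : e ≤ ε := min_le_left _ _
  have h4 : (e/4) ≠ 0 := by simp [ENNReal.div_eq_zero_iff, he0]
  obtain ⟨φ, hφ, -⟩ := hh.exists_boundedContinuous_eLpNorm_sub_le (by norm_num) h4
  have hmid := phi_term φ γ hcost
  have h4sq : ((e/4) ^ (2:ℕ)) ≠ 0 := pow_ne_zero _ h4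
  filter_upwards [ENNReal.tendsto_nhds_zero.mp hmid ((e/4) ^ (2:ℕ))
    (pos_iff_ne_zero.mpr h4sq)] with n hn
  have hd : (fun p : M × M => h p.1 - h p.2) =
      (fun p : M × M => (h - ⇑φ) p.1) +
        ((fun p : M × M => φ p.1 - φ p.2) + fun p : M × M => (⇑φ - h) p.2) := by
    funext p; simp only [Pi.add_apply, Pi.sub_apply]; ring
  have mp1 : MeasurePreserving Prod.fst (γ n) θm := ⟨measurable_fst, h1 n⟩
  have mp2 : MeasurePreserving Prod.snd (γ n) θm := ⟨measurable_snd, h2 n⟩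
  have hhφ : AEStronglyMeasurable (h - ⇑φ) θm :=
    hh.aestronglyMeasurable.sub φ.continuous.aestronglyMeasurable
  have a1 : AEStronglyMeasurable (fun p : M × M => (h - ⇑φ) p.1) (γ n) :=
    hhφ.comp_quasiMeasurePreserving mp1.quasiMeasurePreserving
  have a2 : AEStronglyMeasurable (fun p : M × M => φ p.1 - φ p.2) (γ n) :=
    Continuous.aestronglyMeasurable (by fun_prop)
  have a3 : AEStronglyMeasurable (fun p : M × M => (⇑φ - h) p.2) (γ n) :=
    (φ.continuous.aestronglyMeasurable.sub hh.aestronglyMeasurable).comp_quasiMeasurePreserving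
      mp2.quasiMeasurePreserving
  have e1 : eLpNorm (fun p : M × M => (h - ⇑φ) p.1) 2 (γ n) ≤ e/4 := by
    have := eLpNorm_map_measure (p := 2) (f := Prod.fst) (g := h - ⇑φ)
      (by rw [h1 n]; exact hhφ) measurable_fst.aemeasurable
    rw [h1 n] at this
    calc eLpNorm (fun p : M × M => (h - ⇑φ) p.1) 2 (γ n)
        = eLpNorm (h - ⇑φ) 2 θm := by rw [this]; rfl
      _ ≤ e/4 := hφ
  have e3 : eLpNorm (fun p : M × M => (⇑φ - h) p.2) 2 (γ n) ≤ e/4 := by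
    have hφh : AEStronglyMeasurable (⇑φ - h) θm :=
      φ.continuous.aestronglyMeasurable.sub hh.aestronglyMeasurable
    have := eLpNorm_map_measure (p := 2) (f := Prod.snd) (g := ⇑φ - h)
      (by rw [h2 n]; exact hφh) measurable_snd.aemeasurable
    rw [h2 n] at this
    calc eLpNorm (fun p : M × M => (⇑φ - h) p.2) 2 (γ n)
        = eLpNorm (⇑φ - h) 2 θm := by rw [this]; rfl
      _ = eLpNorm (h - ⇑φ) 2 θm := eLpNorm_sub_comm _ _ _ _
      _ ≤ e/4 := hφ
  have e2 : eLpNorm (fun p : M × M => φ p.1 - φ p.2) 2 (γ n) ≤ e/4 := by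
    rw [eLpNorm_eq_lintegral_rpow_enorm_toReal (by norm_num) (by norm_num)]
    simp only [ENNReal.toReal_ofNat]
    calc (∫⁻ p, ((‖φ p.1 - φ p.2‖₊ : ℝ≥0∞)) ^ (2:ℝ) ∂(γ n)) ^ (1/(2:ℝ))
        ≤ ((e/4) ^ (2:ℕ)) ^ (1/(2:ℝ)) := ENNReal.rpow_le_rpow hn (by norm_num)
      _ = e/4 := by rw [← ENNReal.rpow_natCast, ← ENNReal.rpow_mul]; norm_num
  calc eLpNorm (fun p : M × M => h p.1 - h p.2) 2 (γ n)
      ≤ eLpNorm (fun p : M × M => (h - ⇑φ) p.1) 2 (γ n) +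
        eLpNorm ((fun p : M × M => φ p.1 - φ p.2) + fun p : M × M => (⇑φ - h) p.2) 2 (γ n) := by
        rw [hd]; exact eLpNorm_add_le a1 (a2.add a3) one_le_two
    _ ≤ e/4 + (e/4 + e/4) :=
        add_le_add e1 ((eLpNorm_add_le a2 a3 one_le_two).trans (add_le_add e2 e3))
    _ ≤ e/4 + (e/4 + (e/4 + e/4)) :=
        add_le_add_right (add_le_add_right le_add_self _) _
    _ = (e/4 + e/4) + (e/4 + e/4) := by abel
    _ = e := by
        have hq : e/4 + e/4 = e/2 := by
          rw [ENNReal.div_add_div_same, ← two_mul, show (4:ℝ≥0∞) = 2*2 by norm_num,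
            ENNReal.mul_div_mul_left _ _ two_ne_zero ENNReal.ofNat_ne_top]
        rw [hq, ENNReal.add_halves]
    _ ≤ ε := hee

lemma memℒp_comp_map {α β : Type*} [MeasurableSpace α] [MeasurableSpace β]
    {ν : Measure α} {μ : Measure β} {π : α → β} (hπ : Measurable π) (hmap : ν.map π = μ)
    {u : β → ℝ} (hu : MemLp u 2 μ) : MemLp (fun p => u (π p)) 2 ν := by
  rw [← hmap] at hu
  exact (memLp_map_measure_iff hu.aestronglyMeasurable hπ.aemeasurable).mp hu

lemma eLpNorm_comp_map {α β : Type*} [MeasurableSpace α] [MeasurableSpace β]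
    {ν : Measure α} {μ : Measure β} {π : α → β} (hπ : Measurable π) (hmap : ν.map π = μ)
    (u : β → ℝ) (hu : AEStronglyMeasurable u μ) :
    eLpNorm (fun p => u (π p)) 2 ν = eLpNorm u 2 μ := by
  rw [← hmap] at hu ⊢
  rw [eLpNorm_map_measure (p := 2) hu hπ.aemeasurable]
  rfl

lemma choose_couplings (θ : ℕ → Measure M) (θlim : Measure M)
    [∀ n, IsProbabilityMeasure (θ n)] [IsProbabilityMeasure θlim]
    (f : ℕ → M → ℝ) (flim : M → ℝ)
    (hconv : Tendsto (fun n => TLdist (θ n) θlim (f n) flim) atTop (𝓝 0)) :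
    ∃ ω : ℕ → Measure (M × M),
      (∀ n, (ω n).map Prod.fst = θ n) ∧ (∀ n, (ω n).map Prod.snd = θlim) ∧
      Tendsto (fun n =>
        (∫⁻ p, ENNReal.ofReal (dist p.1 p.2 ^ 2 + |f n p.1 - flim p.2| ^ 2) ∂(ω n)) ^ (1/2 : ℝ))
        atTop (𝓝 0) := by
  set d : ℕ → ℝ≥0∞ := fun n => TLdist (θ n) θlim (f n) flim with hd
  have hdef : ∀ n, d n = ⨅ ω ∈ {ω : Measure (M × M) |
      ω.map Prod.fst = θ n ∧ ω.map Prod.snd = θlim},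
      (∫⁻ p, ENNReal.ofReal (dist p.1 p.2 ^ 2 + |f n p.1 - flim p.2| ^ 2) ∂ω) ^ (1/2 : ℝ) :=
    fun n => rfl
  have hex : ∀ n, ∃ ω' : Measure (M × M),
      (ω'.map Prod.fst = θ n ∧ ω'.map Prod.snd = θlim) ∧
      (d n < ∞ →
        (∫⁻ p, ENNReal.ofReal (dist p.1 p.2 ^ 2 + |f n p.1 - flim p.2| ^ 2) ∂ω') ^ (1/2 : ℝ)
          ≤ d n + ((n : ℝ≥0∞) + 1)⁻¹) := by
    intro n
    by_cases hn : d n < ∞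
    · have hlt : d n < d n + ((n : ℝ≥0∞) + 1)⁻¹ :=
        ENNReal.lt_add_right hn.ne (by simp)
      have hlt' : (⨅ ω ∈ {ω : Measure (M × M) |
          ω.map Prod.fst = θ n ∧ ω.map Prod.snd = θlim},
          (∫⁻ p, ENNReal.ofReal (dist p.1 p.2 ^ 2 + |f n p.1 - flim p.2| ^ 2) ∂ω) ^ (1/2 : ℝ))
          < d n + ((n : ℝ≥0∞) + 1)⁻¹ := by rw [← hdef n]; exact hlt
      obtain ⟨ω', hω'⟩ := iInf_lt_iff.mp hlt'
      obtain ⟨hmem, h2⟩ := iInf_lt_iff.mp hω'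
      exact ⟨ω', hmem, fun _ => h2.le⟩
    · refine ⟨(θ n).prod θlim, ⟨?_, ?_⟩, fun h => absurd h hn⟩
      · simp [Measure.map_fst_prod]
      · simp [Measure.map_snd_prod]
  choose ω hmarg hbound using hex
  refine ⟨ω, fun n => (hmarg n).1, fun n => (hmarg n).2, ?_⟩
  have hinv : Tendsto (fun n : ℕ => ((n : ℝ≥0∞) + 1)⁻¹) atTop (𝓝 0) := by
    refine tendsto_of_tendsto_of_tendsto_of_le_of_le tendsto_const_nhds
      ENNReal.tendsto_inv_nat_nhds_zero (fun n => zero_le) (fun n => ?_)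
    exact ENNReal.inv_le_inv.mpr le_self_add
  have hev : ∀ᶠ n in atTop,
      (∫⁻ p, ENNReal.ofReal (dist p.1 p.2 ^ 2 + |f n p.1 - flim p.2| ^ 2) ∂(ω n)) ^ (1/2 : ℝ)
        ≤ d n + ((n : ℝ≥0∞) + 1)⁻¹ := by
    filter_upwards [ENNReal.tendsto_nhds_zero.mp hconv 1 zero_lt_one] with n hn
    exact hbound n (lt_of_le_of_lt hn ENNReal.one_lt_top)
  refine tendsto_of_tendsto_of_tendsto_of_le_of_le' tendsto_const_nhds ?_
    (Eventually.of_forall fun n => zero_le) hev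
  simpa using hconv.add hinv

end TL2aux

set_option maxHeartbeats 2000000 in
/-- Continuity of inner products under `TL²` convergence: if `(θ_n, f_n) → (θ, f)` and
`(θ_n, g_n) → (θ, g)` in `TL²`, then `∫ f_n g_n dθ_n → ∫ f g dθ`. -/
theorem inner_product_continuous_under_TL2_convergence
    {M : Type*} [MetricSpace M] [CompactSpace M] [MeasurableSpace M] [BorelSpace M]
    (θ : ℕ → Measure M) (θlim : Measure M)
    [∀ n, IsProbabilityMeasure (θ n)] [IsProbabilityMeasure θlim]
    (f g : ℕ → M → ℝ) (flim glim : M → ℝ)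
    (hf : ∀ n, MemLp (f n) 2 (θ n)) (hg : ∀ n, MemLp (g n) 2 (θ n))
    (hflim : MemLp flim 2 θlim) (hglim : MemLp glim 2 θlim)
    (hfconv : Tendsto (fun n => TLdist (θ n) θlim (f n) flim) atTop (𝓝 0))
    (hgconv : Tendsto (fun n => TLdist (θ n) θlim (g n) glim) atTop (𝓝 0)) :
    Tendsto (fun n => ∫ x, f n x * g n x ∂(θ n)) atTop
      (𝓝 (∫ x, flim x * glim x ∂θlim)) := by
  classical
  haveI : Nonempty M := by
    rcases isEmpty_or_nonempty M with hM | hM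
    · exfalso
      have h1 : θlim Set.univ = 1 := measure_univ
      rw [Set.univ_eq_empty_iff.mpr hM, measure_empty] at h1
      exact zero_ne_one h1
    · exact hM
  obtain ⟨ω, hω1, hω2, hDf⟩ := TL2aux.choose_couplings θ θlim f flim hfconv
  obtain ⟨σ, hσ1, hσ2, hDg⟩ := TL2aux.choose_couplings θ θlim g glim hgconv
  haveI hωP : ∀ n, IsProbabilityMeasure (ω n) := fun n => TL2aux.isProb (hω1 n)
  haveI hσP : ∀ n, IsProbabilityMeasure (σ n) := fun n => TL2aux.isProb (hσ1 n)
  have hglue : ∀ n, ∃ τ : Measure (M × M × M), IsProbabilityMeasure τ ∧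
      τ.map (fun p => (p.1, p.2.1)) = ω n ∧ τ.map (fun p => (p.1, p.2.2)) = σ n :=
    fun n => TL2aux.glue (ω n) (σ n) (by rw [hω1 n, hσ1 n])
  choose τ hτP hτ12 hτ13 using hglue
  haveI : ∀ n, IsProbabilityMeasure (τ n) := hτP
  have hm12 : Measurable (fun p : M × M × M => (p.1, p.2.1)) := by fun_prop
  have hm13 : Measurable (fun p : M × M × M => (p.1, p.2.2)) := by fun_prop
  have hm1 : Measurable (fun p : M × M × M => p.1) := measurable_fst
  have hm2 : Measurable (fun p : M × M × M => p.2.1) := by fun_prop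
  have hm3 : Measurable (fun p : M × M × M => p.2.2) := by fun_prop
  -- marginals of the glued measures
  have mτ1 : ∀ n, (τ n).map (fun p : M × M × M => p.1) = θ n := by
    intro n
    rw [← hω1 n, ← hτ12 n, Measure.map_map measurable_fst hm12]
    rfl
  have mτ2 : ∀ n, (τ n).map (fun p : M × M × M => p.2.1) = θlim := by
    intro n
    rw [← hω2 n, ← hτ12 n, Measure.map_map measurable_snd hm12]
    rfl
  have mτ3 : ∀ n, (τ n).map (fun p : M × M × M => p.2.2) = θlim := by
    intro n
    rw [← hσ2 n, ← hτ13 n, Measure.map_map measurable_snd hm13]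
    rfl
  -- membership in L² over τ n
  have hA : ∀ n, MemLp (fun p : M × M × M => f n p.1) 2 (τ n) :=
    fun n => TL2aux.memℒp_comp_map hm1 (mτ1 n) (hf n)
  have hA' : ∀ n, MemLp (fun p : M × M × M => flim p.2.1) 2 (τ n) :=
    fun n => TL2aux.memℒp_comp_map hm2 (mτ2 n) hflim
  have hB : ∀ n, MemLp (fun p : M × M × M => g n p.1) 2 (τ n) :=
    fun n => TL2aux.memℒp_comp_map hm1 (mτ1 n) (hg n)
  have hB' : ∀ n, MemLp (fun p : M × M × M => glim p.2.1) 2 (τ n) :=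
    fun n => TL2aux.memℒp_comp_map hm2 (mτ2 n) hglim
  have hB'' : ∀ n, MemLp (fun p : M × M × M => glim p.2.2) 2 (τ n) :=
    fun n => TL2aux.memℒp_comp_map hm3 (mτ3 n) hglim
  set E1 : ℕ → ℝ≥0∞ := fun n =>
    eLpNorm ((fun p : M × M × M => f n p.1) - fun p : M × M × M => flim p.2.1) 2 (τ n) with hE1def
  set E2 : ℕ → ℝ≥0∞ := fun n =>
    eLpNorm ((fun p : M × M × M => g n p.1) - fun p : M × M × M => glim p.2.2) 2 (τ n) with hE2def
  set E3 : ℕ → ℝ≥0∞ := fun n =>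
    eLpNorm ((fun p : M × M × M => glim p.2.2) - fun p : M × M × M => glim p.2.1) 2 (τ n) with hE3def
  set CF : ℝ := (eLpNorm flim 2 θlim).toReal with hCF
  set CG : ℝ := (eLpNorm glim 2 θlim).toReal with hCG
  set V : ℕ → ℝ := fun n => (E2 n + E3 n).toReal with hVdef
  -- the key deterministic estimate
  have key : ∀ n, dist (∫ x, f n x * g n x ∂(θ n)) (∫ x, flim x * glim x ∂θlim)
      ≤ (E1 n).toReal * (CG + V n) + CF * V n := by
    intro n
    have hib : ∫ x, f n x * g n x ∂(θ n)
        = inner (𝕜 := ℝ) ((hA n).toLp _) ((hB n).toLp _) := by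
      have hint : ∫ x, f n x * g n x ∂(θ n) = ∫ p, f n p.1 * g n p.1 ∂(τ n) := by
        have haesm : AEStronglyMeasurable (fun x => f n x * g n x) ((τ n).map (fun p : M × M × M => p.1)) := by
          rw [mτ1 n]
          exact (hf n).aestronglyMeasurable.mul (hg n).aestronglyMeasurable
        rw [← mτ1 n]
        exact integral_map hm1.aemeasurable haesm
      rw [hint, MeasureTheory.L2.inner_def]
      simp only [RCLike.inner_apply, conj_trivial]
      refine integral_congr_ae ?_
      filter_upwards [(hA n).coeFn_toLp, (hB n).coeFn_toLp] with p h1 h2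
      rw [h1, h2]; exact mul_comm _ _
    have hib' : ∫ x, flim x * glim x ∂θlim
        = inner (𝕜 := ℝ) ((hA' n).toLp _) ((hB' n).toLp _) := by
      have hint : ∫ x, flim x * glim x ∂θlim = ∫ p, flim p.2.1 * glim p.2.1 ∂(τ n) := by
        have haesm : AEStronglyMeasurable (fun x => flim x * glim x) ((τ n).map (fun p : M × M × M => p.2.1)) := by
          rw [mτ2 n]
          exact hflim.aestronglyMeasurable.mul hglim.aestronglyMeasurable
        rw [← mτ2 n]
        exact integral_map hm2.aemeasurable haesm
      rw [hint, MeasureTheory.L2.inner_def]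
      simp only [RCLike.inner_apply, conj_trivial]
      refine integral_congr_ae ?_
      filter_upwards [(hA' n).coeFn_toLp, (hB' n).coeFn_toLp] with p h1 h2
      rw [h1, h2]; exact mul_comm _ _
    have hest := TL2aux.inner_est ((hA n).toLp _) ((hB n).toLp _)
      ((hA' n).toLp _) ((hB' n).toLp _)
    have hna : ‖(hA n).toLp _ - (hA' n).toLp _‖ = (E1 n).toReal := by
      rw [← MemLp.toLp_sub, Lp.norm_toLp]
    have hna' : ‖(hA' n).toLp _‖ = CF := by
      rw [Lp.norm_toLp, TL2aux.eLpNorm_comp_map hm2 (mτ2 n) flim hflim.aestronglyMeasurable]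
    have hnb' : ‖(hB' n).toLp _‖ = CG := by
      rw [Lp.norm_toLp, TL2aux.eLpNorm_comp_map hm2 (mτ2 n) glim hglim.aestronglyMeasurable]
    have hnbb : ‖(hB n).toLp _ - (hB' n).toLp _‖ ≤ V n := by
      rw [← MemLp.toLp_sub, Lp.norm_toLp]
      refine ENNReal.toReal_mono (ENNReal.add_ne_top.mpr
        ⟨((hB n).sub (hB'' n)).eLpNorm_ne_top, ((hB'' n).sub (hB' n)).eLpNorm_ne_top⟩) ?_
      have hsplit : ((fun p : M × M × M => g n p.1) - fun p : M × M × M => glim p.2.1)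
          = (((fun p : M × M × M => g n p.1) - fun p : M × M × M => glim p.2.2) +
            ((fun p : M × M × M => glim p.2.2) - fun p : M × M × M => glim p.2.1)) := by
        funext p; simp only [Pi.add_apply, Pi.sub_apply]; ring
      rw [hsplit]
      exact eLpNorm_add_le ((hB n).sub (hB'' n)).aestronglyMeasurable
        ((hB'' n).sub (hB' n)).aestronglyMeasurable one_le_two
    calc dist (∫ x, f n x * g n x ∂(θ n)) (∫ x, flim x * glim x ∂θlim)
        = |inner (𝕜 := ℝ) ((hA n).toLp _) ((hB n).toLp _)
            - inner (𝕜 := ℝ) ((hA' n).toLp _) ((hB' n).toLp _)| := by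
          rw [Real.dist_eq, hib, hib']
      _ ≤ ‖(hA n).toLp _ - (hA' n).toLp _‖ * (‖(hB' n).toLp _‖
            + ‖(hB n).toLp _ - (hB' n).toLp _‖)
            + ‖(hA' n).toLp _‖ * ‖(hB n).toLp _ - (hB' n).toLp _‖ := hest
      _ ≤ (E1 n).toReal * (CG + V n) + CF * V n := by
          rw [hna, hna', hnb']
          exact add_le_add
            (mul_le_mul_of_nonneg_left (add_le_add_right hnbb _) ENNReal.toReal_nonneg)
            (mul_le_mul_of_nonneg_left hnbb ENNReal.toReal_nonneg)
  -- E1 → 0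
  have hE1b : ∀ n, E1 n ≤
      (∫⁻ p, ENNReal.ofReal (dist p.1 p.2 ^ 2 + |f n p.1 - flim p.2| ^ 2) ∂(ω n)) ^ (1/2 : ℝ) := by
    intro n
    have hu : AEStronglyMeasurable ((fun q : M × M => f n q.1) - fun q : M × M => flim q.2) (ω n) :=
      ((hf n).aestronglyMeasurable.comp_quasiMeasurePreserving
          (⟨measurable_fst, hω1 n⟩ : MeasurePreserving _ _ _).quasiMeasurePreserving).sub
        (hflim.aestronglyMeasurable.comp_quasiMeasurePreserving
          (⟨measurable_snd, hω2 n⟩ : MeasurePreserving _ _ _).quasiMeasurePreserving)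
    have heq : E1 n = eLpNorm ((fun q : M × M => f n q.1) - fun q : M × M => flim q.2) 2 (ω n) := by
      calc E1 n = eLpNorm (fun p : M × M × M =>
            ((fun q : M × M => f n q.1) - fun q : M × M => flim q.2) (p.1, p.2.1)) 2 (τ n) :=
          eLpNorm_congr_ae (Filter.Eventually.of_forall fun p => rfl)
        _ = _ := TL2aux.eLpNorm_comp_map hm12 (hτ12 n)
          ((fun q : M × M => f n q.1) - fun q : M × M => flim q.2) hu
    rw [heq, eLpNorm_eq_lintegral_rpow_enorm_toReal (by norm_num) (by norm_num)]
    simp only [ENNReal.toReal_ofNat]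
    refine ENNReal.rpow_le_rpow (lintegral_mono fun q => ?_) (by norm_num)
    simp only [Pi.sub_apply]
    rw [enorm_eq_nnnorm, TL2aux.nnnorm_sq_eq]
    refine ENNReal.ofReal_le_ofReal ?_
    rw [sq_abs]
    exact le_add_of_nonneg_left (by positivity)
  have hE1 : Tendsto E1 atTop (𝓝 0) :=
    tendsto_of_tendsto_of_tendsto_of_le_of_le tendsto_const_nhds hDf
      (fun n => zero_le) hE1b
  -- E2 → 0
  have hE2b : ∀ n, E2 n ≤
      (∫⁻ p, ENNReal.ofReal (dist p.1 p.2 ^ 2 + |g n p.1 - glim p.2| ^ 2) ∂(σ n)) ^ (1/2 : ℝ) := by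
    intro n
    have hu : AEStronglyMeasurable ((fun q : M × M => g n q.1) - fun q : M × M => glim q.2) (σ n) :=
      ((hg n).aestronglyMeasurable.comp_quasiMeasurePreserving
          (⟨measurable_fst, hσ1 n⟩ : MeasurePreserving _ _ _).quasiMeasurePreserving).sub
        (hglim.aestronglyMeasurable.comp_quasiMeasurePreserving
          (⟨measurable_snd, hσ2 n⟩ : MeasurePreserving _ _ _).quasiMeasurePreserving)
    have heq : E2 n = eLpNorm ((fun q : M × M => g n q.1) - fun q : M × M => glim q.2) 2 (σ n) := by
      calc E2 n = eLpNorm (fun p : M × M × M =>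
            ((fun q : M × M => g n q.1) - fun q : M × M => glim q.2) (p.1, p.2.2)) 2 (τ n) :=
          eLpNorm_congr_ae (Filter.Eventually.of_forall fun p => rfl)
        _ = _ := TL2aux.eLpNorm_comp_map hm13 (hτ13 n)
          ((fun q : M × M => g n q.1) - fun q : M × M => glim q.2) hu
    rw [heq, eLpNorm_eq_lintegral_rpow_enorm_toReal (by norm_num) (by norm_num)]
    simp only [ENNReal.toReal_ofNat]
    refine ENNReal.rpow_le_rpow (lintegral_mono fun q => ?_) (by norm_num)
    simp only [Pi.sub_apply]
    rw [enorm_eq_nnnorm, TL2aux.nnnorm_sq_eq]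
    refine ENNReal.ofReal_le_ofReal ?_
    rw [sq_abs]
    exact le_add_of_nonneg_left (by positivity)
  have hE2 : Tendsto E2 atTop (𝓝 0) :=
    tendsto_of_tendsto_of_tendsto_of_le_of_le tendsto_const_nhds hDg
      (fun n => zero_le) hE2b
  -- E3 → 0, via the density argument
  have hmγ : Measurable (fun p : M × M × M => (p.2.2, p.2.1)) := by fun_prop
  set γ : ℕ → Measure (M × M) := fun n => (τ n).map (fun p : M × M × M => (p.2.2, p.2.1))
    with hγdef
  haveI : ∀ n, IsProbabilityMeasure (γ n) := fun n =>
    Measure.isProbabilityMeasure_map hmγ.aemeasurable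
  have hγ1 : ∀ n, (γ n).map Prod.fst = θlim := by
    intro n
    rw [hγdef]
    rw [Measure.map_map measurable_fst hmγ]
    exact mτ3 n
  have hγ2 : ∀ n, (γ n).map Prod.snd = θlim := by
    intro n
    rw [hγdef]
    rw [Measure.map_map measurable_snd hmγ]
    exact mτ2 n
  have hXf : Tendsto (fun n =>
      ∫⁻ p, ENNReal.ofReal (dist p.1 p.2 ^ 2 + |f n p.1 - flim p.2| ^ 2) ∂(ω n)) atTop (𝓝 0) := by
    have h := (ENNReal.Tendsto.pow (n := 2) hDf).congr fun n => TL2aux.sqrt_sq _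
    rwa [show ((0:ℝ≥0∞) ^ (2:ℕ)) = 0 by norm_num] at h
  have hXg : Tendsto (fun n =>
      ∫⁻ p, ENNReal.ofReal (dist p.1 p.2 ^ 2 + |g n p.1 - glim p.2| ^ 2) ∂(σ n)) atTop (𝓝 0) := by
    have h := (ENNReal.Tendsto.pow (n := 2) hDg).congr fun n => TL2aux.sqrt_sq _
    rwa [show ((0:ℝ≥0∞) ^ (2:ℕ)) = 0 by norm_num] at h
  have hcostγ : Tendsto (fun n =>
      ∫⁻ q, ENNReal.ofReal (dist q.1 q.2 ^ 2) ∂(γ n)) atTop (𝓝 0) := by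
    have hbound : ∀ n, (∫⁻ q, ENNReal.ofReal (dist q.1 q.2 ^ 2) ∂(γ n)) ≤
        2 * (∫⁻ p, ENNReal.ofReal (dist p.1 p.2 ^ 2 + |f n p.1 - flim p.2| ^ 2) ∂(ω n)) +
        2 * (∫⁻ p, ENNReal.ofReal (dist p.1 p.2 ^ 2 + |g n p.1 - glim p.2| ^ 2) ∂(σ n)) := by
      intro n
      have hmeas : Measurable (fun q : M × M => ENNReal.ofReal (dist q.1 q.2 ^ 2)) :=
        (ENNReal.continuous_ofReal.comp (by fun_prop)).measurable
      have h1 : (∫⁻ q, ENNReal.ofReal (dist q.1 q.2 ^ 2) ∂(γ n))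
          = ∫⁻ p, ENNReal.ofReal (dist p.2.2 p.2.1 ^ 2) ∂(τ n) := by
        rw [hγdef]; exact lintegral_map hmeas hmγ
      have h2 : ∀ p : M × M × M, ENNReal.ofReal (dist p.2.2 p.2.1 ^ 2) ≤
          2 * ENNReal.ofReal (dist p.1 p.2.1 ^ 2) + 2 * ENNReal.ofReal (dist p.1 p.2.2 ^ 2) := by
        intro p
        have htri : dist p.2.2 p.2.1 ≤ dist p.1 p.2.2 + dist p.1 p.2.1 := by
          rw [dist_comm p.1 p.2.2]; exact dist_triangle _ _ _
        have hsq : dist p.2.2 p.2.1 ^ 2 ≤ 2 * dist p.1 p.2.1 ^ 2 + 2 * dist p.1 p.2.2 ^ 2 := by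
          nlinarith [htri, sq_nonneg (dist p.1 p.2.2 - dist p.1 p.2.1),
            dist_nonneg (x := p.1) (y := p.2.1), dist_nonneg (x := p.1) (y := p.2.2),
            dist_nonneg (x := p.2.2) (y := p.2.1)]
        calc ENNReal.ofReal (dist p.2.2 p.2.1 ^ 2)
            ≤ ENNReal.ofReal (2 * dist p.1 p.2.1 ^ 2 + 2 * dist p.1 p.2.2 ^ 2) :=
              ENNReal.ofReal_le_ofReal hsq
          _ = _ := by
              rw [ENNReal.ofReal_add (by positivity) (by positivity),
                ENNReal.ofReal_mul (by norm_num), ENNReal.ofReal_mul (by norm_num)]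
              norm_num
      have h3 : (∫⁻ p, ENNReal.ofReal (dist p.2.2 p.2.1 ^ 2) ∂(τ n)) ≤
          2 * (∫⁻ p, ENNReal.ofReal (dist p.1 p.2.1 ^ 2) ∂(τ n)) +
          2 * (∫⁻ p, ENNReal.ofReal (dist p.1 p.2.2 ^ 2) ∂(τ n)) := by
        calc (∫⁻ p, ENNReal.ofReal (dist p.2.2 p.2.1 ^ 2) ∂(τ n))
            ≤ ∫⁻ p, (2 * ENNReal.ofReal (dist p.1 p.2.1 ^ 2)
                + 2 * ENNReal.ofReal (dist p.1 p.2.2 ^ 2)) ∂(τ n) := lintegral_mono h2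
          _ = _ := by
              have m1 : Measurable (fun p : M × M × M => ENNReal.ofReal (dist p.1 p.2.1 ^ 2)) :=
                (ENNReal.continuous_ofReal.comp (by fun_prop)).measurable
              have m2 : Measurable (fun p : M × M × M => ENNReal.ofReal (dist p.1 p.2.2 ^ 2)) :=
                (ENNReal.continuous_ofReal.comp (by fun_prop)).measurable
              rw [lintegral_add_left (m1.const_mul 2),
                lintegral_const_mul 2 m1, lintegral_const_mul 2 m2]
      have h4 : (∫⁻ p, ENNReal.ofReal (dist p.1 p.2.1 ^ 2) ∂(τ n)) ≤
          ∫⁻ p, ENNReal.ofReal (dist p.1 p.2 ^ 2 + |f n p.1 - flim p.2| ^ 2) ∂(ω n) := by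
        have h5 : (∫⁻ p, ENNReal.ofReal (dist p.1 p.2.1 ^ 2) ∂(τ n))
            = ∫⁻ q, ENNReal.ofReal (dist q.1 q.2 ^ 2) ∂(ω n) := by
          rw [← hτ12 n, lintegral_map hmeas hm12]
        rw [h5]
        exact lintegral_mono fun q => ENNReal.ofReal_le_ofReal
          (le_add_of_nonneg_right (by positivity))
      have h6 : (∫⁻ p, ENNReal.ofReal (dist p.1 p.2.2 ^ 2) ∂(τ n)) ≤
          ∫⁻ p, ENNReal.ofReal (dist p.1 p.2 ^ 2 + |g n p.1 - glim p.2| ^ 2) ∂(σ n) := by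
        have h5 : (∫⁻ p, ENNReal.ofReal (dist p.1 p.2.2 ^ 2) ∂(τ n))
            = ∫⁻ q, ENNReal.ofReal (dist q.1 q.2 ^ 2) ∂(σ n) := by
          rw [← hτ13 n, lintegral_map hmeas hm13]
        rw [h5]
        exact lintegral_mono fun q => ENNReal.ofReal_le_ofReal
          (le_add_of_nonneg_right (by positivity))
      rw [h1]
      exact h3.trans (add_le_add (mul_le_mul_right h4 2) (mul_le_mul_right h6 2))
    refine tendsto_of_tendsto_of_tendsto_of_le_of_le tendsto_const_nhds ?_
      (fun n => zero_le) hbound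
    have h7 : Tendsto (fun n => (2:ℝ≥0∞) *
        (∫⁻ p, ENNReal.ofReal (dist p.1 p.2 ^ 2 + |f n p.1 - flim p.2| ^ 2) ∂(ω n))) atTop (𝓝 0) := by
      simpa using ENNReal.Tendsto.const_mul hXf (Or.inr (by norm_num))
    have h8 : Tendsto (fun n => (2:ℝ≥0∞) *
        (∫⁻ p, ENNReal.ofReal (dist p.1 p.2 ^ 2 + |g n p.1 - glim p.2| ^ 2) ∂(σ n))) atTop (𝓝 0) := by
      simpa using ENNReal.Tendsto.const_mul hXg (Or.inr (by norm_num))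
    simpa using h7.add h8
  have hE3' := TL2aux.dev_tendsto θlim hglim γ hγ1 hγ2 hcostγ
  have hE3 : Tendsto E3 atTop (𝓝 0) := by
    refine hE3'.congr fun n => ?_
    have hu : AEStronglyMeasurable (fun q : M × M => glim q.1 - glim q.2) (γ n) :=
      (hglim.aestronglyMeasurable.comp_quasiMeasurePreserving
          (⟨measurable_fst, hγ1 n⟩ : MeasurePreserving _ _ _).quasiMeasurePreserving).sub
        (hglim.aestronglyMeasurable.comp_quasiMeasurePreserving
          (⟨measurable_snd, hγ2 n⟩ : MeasurePreserving _ _ _).quasiMeasurePreserving)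
    calc eLpNorm (fun q : M × M => glim q.1 - glim q.2) 2 (γ n)
        = eLpNorm (fun p : M × M × M =>
            (fun q : M × M => glim q.1 - glim q.2) (p.2.2, p.2.1)) 2 (τ n) :=
          (TL2aux.eLpNorm_comp_map hmγ rfl _ hu).symm
      _ = E3 n := eLpNorm_congr_ae (Filter.Eventually.of_forall fun p => rfl)
  -- conclusion
  have hVt : Tendsto V atTop (𝓝 0) := by
    have h23 : Tendsto (fun n => E2 n + E3 n) atTop (𝓝 0) := by simpa using hE2.add hE3
    have := (ENNReal.tendsto_toReal (a := 0) (by simp)).comp h23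
    exact this
  have hU : Tendsto (fun n => (E1 n).toReal) atTop (𝓝 0) := by
    have := (ENNReal.tendsto_toReal (a := 0) (by simp)).comp hE1
    exact this
  rw [tendsto_iff_dist_tendsto_zero]
  refine squeeze_zero (fun n => dist_nonneg) key ?_
  have hfin : Tendsto (fun n => (E1 n).toReal * (CG + V n) + CF * V n) atTop
      (𝓝 (0 * (CG + 0) + CF * 0)) :=
    (hU.mul (tendsto_const_nhds.add hVt)).add (hVt.const_mul CF)
  simpa using hfin
end
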